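/- arXiv:0901.3904 — 12 statements merged into one kernel-verified Lean document; each statement's English description precedes it below -/
import Mathlib

section
/- Let α, β : ℝ → ℝ³ be twice differentiable curves, fix u ∈ ℝ, and let c < d be real numbers. Then the identity ⟨(α'(u) + v·β'(u)) × β(u), α''(u) + v·β''(u)⟩ = ⟨(α'(u) + v·β'(u)) × β(u), e₃⟩ · (1 + 2v⟨α'(u), β'(u)⟩ + v²‖β'(u)‖²) holds for every v ∈ (c, d) if and only if the following four equations hold: (i) ⟨α'(u) × β(u), α''(u)⟩ = ⟨α'(u) × β(u), e₃⟩; (ii) ⟨α'(u) × β(u), β''(u)⟩ + ⟨β'(u) × β(u), α''(u)⟩ = ⟨β'(u) × β(u), e₃⟩ + 2⟨α'(u), β'(u)⟩·⟨α'(u) × β(u), e₃⟩; (iii) ⟨β'(u) × β(u), β''(u)⟩ = 2⟨α'(u), β'(u)⟩·⟨β'(u) × β(u), e₃⟩ + ‖β'(u)‖²·⟨α'(u) × β(u), e₃⟩; (iv) ‖β'(u)‖²·⟨β'(u) × β(u), e₃⟩ = 0. -/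
noncomputable section
open scoped RealInnerProductSpace

/-- ℝ³ with its standard inner product structure. -/
abbrev R3 : Type := EuclideanSpace ℝ (Fin 3)

/-- The cross product on ℝ³. -/
def cross (v w : R3) : R3 :=
  (WithLp.equiv 2 (Fin 3 → ℝ)).symm
    ![v 1 * w 2 - v 2 * w 1, v 2 * w 0 - v 0 * w 2, v 0 * w 1 - v 1 * w 0]

/-- The vector e₃ = (0,0,1). -/
def e3 : R3 := (WithLp.equiv 2 (Fin 3 → ℝ)).symm ![0, 0, 1]

/-- The cross product is linear (affine) in its first argument. -/
lemma cross_add_smul (x y z : R3) (v : ℝ) :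
    cross (x + v • y) z = cross x z + v • cross y z := by
  ext i
  fin_cases i <;>
    simp [cross, WithLp.equiv_symm_apply, PiLp.add_apply, PiLp.smul_apply,
      smul_eq_mul] <;> ring

/-- A real cubic vanishing on a nonempty open interval has zero coefficients. -/
lemma cubic_coeffs_zero {c d : ℝ} (hcd : c < d) {c0 c1 c2 c3 : ℝ}
    (h : ∀ v ∈ Set.Ioo c d, c0 + c1 * v + c2 * v ^ 2 + c3 * v ^ 3 = 0) :
    c0 = 0 ∧ c1 = 0 ∧ c2 = 0 ∧ c3 = 0 := by
  have hp : (Polynomial.C c0 + Polynomial.C c1 * Polynomial.X +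
      Polynomial.C c2 * Polynomial.X ^ 2 + Polynomial.C c3 * Polynomial.X ^ 3 :
      Polynomial ℝ) = 0 := by
    apply Polynomial.eq_zero_of_infinite_isRoot
    apply (Set.Ioo_infinite hcd).mono
    intro v hv
    simp [Polynomial.IsRoot, h v hv]
  have h0 := congrArg (fun p : Polynomial ℝ => p.coeff 0) hp
  have h1 := congrArg (fun p : Polynomial ℝ => p.coeff 1) hp
  have h2 := congrArg (fun p : Polynomial ℝ => p.coeff 2) hp
  have h3 := congrArg (fun p : Polynomial ℝ => p.coeff 3) hp
  simp [Polynomial.coeff_add, Polynomial.coeff_C, Polynomial.coeff_C_mul,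
    Polynomial.coeff_X_pow, Polynomial.coeff_X] at h0 h1 h2 h3
  exact ⟨h0, h1, h2, h3⟩

/-- Proposition 1: the minimality identity holds for all v ∈ (c,d) iff the four
coefficient equations of system (5) hold. -/
theorem ruled_minimality_iff_system
    (α β : ℝ → R3) (hα : ContDiff ℝ 2 α) (hβ : ContDiff ℝ 2 β)
    (u : ℝ) (c d : ℝ) (hcd : c < d) :
    (∀ v ∈ Set.Ioo c d,
        ⟪cross (deriv α u + v • deriv β u) (β u),
            deriv (deriv α) u + v • deriv (deriv β) u⟫ =
          ⟪cross (deriv α u + v • deriv β u) (β u), e3⟫ *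
            (1 + 2 * v * ⟪deriv α u, deriv β u⟫ + v ^ 2 * ‖deriv β u‖ ^ 2)) ↔
      (⟪cross (deriv α u) (β u), deriv (deriv α) u⟫ =
          ⟪cross (deriv α u) (β u), e3⟫ ∧
        ⟪cross (deriv α u) (β u), deriv (deriv β) u⟫ +
            ⟪cross (deriv β u) (β u), deriv (deriv α) u⟫ =
          ⟪cross (deriv β u) (β u), e3⟫ +
            2 * ⟪deriv α u, deriv β u⟫ * ⟪cross (deriv α u) (β u), e3⟫ ∧
        ⟪cross (deriv β u) (β u), deriv (deriv β) u⟫ =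
          2 * ⟪deriv α u, deriv β u⟫ * ⟪cross (deriv β u) (β u), e3⟫ +
            ‖deriv β u‖ ^ 2 * ⟪cross (deriv α u) (β u), e3⟫ ∧
        ‖deriv β u‖ ^ 2 * ⟪cross (deriv β u) (β u), e3⟫ = 0) := by
  set a1 := deriv α u
  set b1 := deriv β u
  set a2 := deriv (deriv α) u
  set b2 := deriv (deriv β) u
  set A : ℝ := ⟪cross a1 (β u), a2⟫
  set B : ℝ := ⟪cross a1 (β u), b2⟫ + ⟪cross b1 (β u), a2⟫
  set Cc : ℝ := ⟪cross b1 (β u), b2⟫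
  set E : ℝ := ⟪cross a1 (β u), e3⟫
  set F : ℝ := ⟪cross b1 (β u), e3⟫
  set P : ℝ := ⟪a1, b1⟫
  set Q : ℝ := ‖b1‖ ^ 2
  have hexp : ∀ v : ℝ,
      (⟪cross (a1 + v • b1) (β u), a2 + v • b2⟫ : ℝ) = A + B * v + Cc * v ^ 2 := by
    intro v
    rw [cross_add_smul]
    simp only [inner_add_left, inner_add_right, real_inner_smul_left,
      real_inner_smul_right, A, B, Cc]
    ring
  have hexp3 : ∀ v : ℝ,
      (⟪cross (a1 + v • b1) (β u), e3⟫ : ℝ) = E + F * v := by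
    intro v
    rw [cross_add_smul]
    simp only [inner_add_left, real_inner_smul_left, E, F]
    ring
  constructor
  · intro h
    have hz : ∀ v ∈ Set.Ioo c d,
        (A - E) + (B - F - 2 * P * E) * v + (Cc - 2 * P * F - Q * E) * v ^ 2 +
          (-(Q * F)) * v ^ 3 = 0 := by
      intro v hv
      have hv' := h v hv
      rw [hexp v, hexp3 v] at hv'
      linear_combination hv'
    obtain ⟨h0, h1, h2, h3⟩ := cubic_coeffs_zero hcd hz
    refine ⟨by linarith, by linear_combination h1 + h0 * 0, by linear_combination h2,
      by linear_combination -h3⟩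
  · rintro ⟨h1, h2, h3, h4⟩
    intro v _
    rw [hexp v, hexp3 v]
    linear_combination h1 + v * h2 + v ^ 2 * h3 - v ^ 3 * h4
end
end

section
/- Let β : (a, b) → ℝ³ be a twice differentiable curve with ‖β(u)‖ = 1 and β'(u) ≠ 0 for every u ∈ (a, b), and suppose that ⟨β'(u) × β(u), e₃⟩ = 0 (equivalently β'₁(u)β₂(u) − β'₂(u)β₁(u) = 0) for every u ∈ (a, b). Then β takes its values in a plane containing the z-axis: there exists a nonzero vector w ∈ ℝ³ with ⟨w, e₃⟩ = 0 such that ⟨β(u), w⟩ = 0 for all u ∈ (a, b). -/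
noncomputable section
open scoped RealInnerProductSpace
open Filter Set Topology

private lemma aux_const {f : ℝ → ℝ} {s : Set ℝ} (hs : Convex ℝ s) (ho : IsOpen s)
    (h : ∀ x ∈ s, HasDerivAt f 0 x) : ∀ x ∈ s, ∀ y ∈ s, f x = f y := by
  intro x hx y hy
  refine hs.is_const_of_fderivWithin_eq_zero
    (fun z hz => (h z hz).differentiableAt.differentiableWithinAt) (fun z hz => ?_) hx hy
  rw [fderivWithin_of_isOpen ho hz, (h z hz).hasFDerivAt.fderiv]
  ext
  simp

set_option maxHeartbeats 2000000 in
/-- Key step of Proposition 2: the director curve lies in a plane containing the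
z-axis. -/
theorem director_in_plane_through_z_axis
    (a b : ℝ) (β : ℝ → R3)
    (hβ : ∀ u ∈ Set.Ioo a b, ContDiffAt ℝ 2 β u)
    (hunit : ∀ u ∈ Set.Ioo a b, ‖β u‖ = 1)
    (hne : ∀ u ∈ Set.Ioo a b, deriv β u ≠ 0)
    (hhor : ∀ u ∈ Set.Ioo a b, ⟪cross (deriv β u) (β u), e3⟫ = 0) :
    ∃ w : R3, w ≠ 0 ∧ ⟪w, e3⟫ = 0 ∧ ∀ u ∈ Set.Ioo a b, ⟪β u, w⟫ = 0 := by
  by_cases hab : a < b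
  swap
  · refine ⟨(WithLp.equiv 2 (Fin 3 → ℝ)).symm ![1, 0, 0], ?_, ?_, ?_⟩
    · intro h
      have h0 : ((WithLp.equiv 2 (Fin 3 → ℝ)).symm ![(1:ℝ), 0, 0] : R3) 0 = (0 : R3) 0 := by
        rw [h]
      simp [WithLp.equiv_symm_apply, PiLp.toLp_apply] at h0
    · simp [e3, PiLp.inner_apply, Fin.sum_univ_three, WithLp.equiv_symm_apply, PiLp.toLp_apply]
    · intro u hu
      rw [Set.Ioo_eq_empty hab] at hu
      exact absurd hu (Set.notMem_empty u)
  set s : Set ℝ := Set.Ioo a b with hs_def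
  have hs_open : IsOpen s := isOpen_Ioo
  have hD : ∀ u ∈ s, DifferentiableAt ℝ β u := fun u hu =>
    (hβ u hu).differentiableAt (by norm_num)
  have hB : ∀ u ∈ s, ∀ i : Fin 3, HasDerivAt (fun v => β v i) (deriv β u i) u := by
    intro u hu i
    have := (EuclideanSpace.proj i : R3 →L[ℝ] ℝ).hasFDerivAt.comp_hasDerivAt u
      (hD u hu).hasDerivAt
    exact this
  have hW : ∀ u ∈ s, deriv β u 0 * β u 1 - deriv β u 1 * β u 0 = 0 := by
    intro u hu
    simpa [cross, e3, PiLp.inner_apply, Fin.sum_univ_three, WithLp.equiv_symm_apply, PiLp.toLp_apply]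
      using hhor u hu
  have hS : ∀ u ∈ s, β u 0 ^ 2 + β u 1 ^ 2 + β u 2 ^ 2 = 1 := by
    intro u hu
    have h2 : ‖β u‖ ^ 2 = 1 := by rw [hunit u hu]; norm_num
    rw [EuclideanSpace.norm_eq, Real.sq_sqrt (by positivity)] at h2
    simpa [Fin.sum_univ_three, sq] using h2
  -- find a point where the horizontal part is nonzero
  obtain ⟨p, hp, hrp⟩ : ∃ p ∈ s, β p 0 ^ 2 + β p 1 ^ 2 ≠ 0 := by
    by_contra hcon
    push_neg at hcon
    have hz : ∀ u ∈ s, β u 0 = 0 ∧ β u 1 = 0 := by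
      intro u hu
      have h := hcon u hu
      constructor <;> nlinarith [sq_nonneg (β u 0), sq_nonneg (β u 1)]
    have hone : ∀ u ∈ s, β u 2 ^ 2 = 1 := by
      intro u hu
      have h1 := hS u hu
      have h2 := (hz u hu).1
      have h3 := (hz u hu).2
      nlinarith
    have hu₀ : (a + b) / 2 ∈ s := ⟨by linarith, by linarith⟩
    set u₀ : ℝ := (a + b) / 2
    have hkey : ∀ x ∈ s, ∀ y ∈ s, x ≤ y → β x 2 = β y 2 := by
      intro x hx y hy hxy
      by_contra hne2
      have hcont : ContinuousOn (fun u => β u 2) (Set.Icc x y) := by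
        intro v hv
        have hv' : v ∈ s := ⟨lt_of_lt_of_le hx.1 hv.1, lt_of_le_of_lt hv.2 hy.2⟩
        exact ((hB v hv' 2).continuousAt).continuousWithinAt
      have hx2 : β x 2 = 1 ∨ β x 2 = -1 := by
        have h1 := hone x hx
        rcases mul_eq_zero.mp (show (β x 2 - 1) * (β x 2 + 1) = 0 by nlinarith) with h | h
        · exact Or.inl (by linarith)
        · exact Or.inr (by linarith)
      have hy2 : β y 2 = 1 ∨ β y 2 = -1 := by
        have h1 := hone y hy
        rcases mul_eq_zero.mp (show (β y 2 - 1) * (β y 2 + 1) = 0 by nlinarith) with h | h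
        · exact Or.inl (by linarith)
        · exact Or.inr (by linarith)
      obtain ⟨z, hzmem, hz0⟩ : ∃ z ∈ Set.Icc x y, β z 2 = 0 := by
        rcases hx2 with h1 | h1 <;> rcases hy2 with h2 | h2
        · exact absurd (h1.trans h2.symm) hne2
        · have h0 : (0:ℝ) ∈ (fun u => β u 2) '' Set.Icc x y := by
            apply intermediate_value_Icc' hxy hcont
            rw [h1, h2]; constructor <;> norm_num
          obtain ⟨z, hz1, hz2⟩ := h0
          exact ⟨z, hz1, hz2⟩
        · have h0 : (0:ℝ) ∈ (fun u => β u 2) '' Set.Icc x y := by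
            apply intermediate_value_Icc hxy hcont
            rw [h1, h2]; constructor <;> norm_num
          obtain ⟨z, hz1, hz2⟩ := h0
          exact ⟨z, hz1, hz2⟩
        · exact absurd (h1.trans h2.symm) hne2
      have hzs : z ∈ s := ⟨lt_of_lt_of_le hx.1 hzmem.1, lt_of_le_of_lt hzmem.2 hy.2⟩
      have := hone z hzs
      rw [hz0] at this
      norm_num at this
    have hconst : ∀ u ∈ s, β u = β u₀ := by
      intro u hu
      have h2 : β u 2 = β u₀ 2 := by
        rcases le_total u u₀ with h | h
        · exact hkey u hu u₀ hu₀ h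
        · exact (hkey u₀ hu₀ u hu h).symm
      have h0 : β u 0 = β u₀ 0 := by rw [(hz u hu).1, (hz u₀ hu₀).1]
      have h1 : β u 1 = β u₀ 1 := by rw [(hz u hu).2, (hz u₀ hu₀).2]
      ext i
      fin_cases i
      · exact h0
      · exact h1
      · exact h2
    have hder0 : deriv β u₀ = 0 := by
      have hev : β =ᶠ[𝓝 u₀] fun _ => β u₀ :=
        Filter.eventuallyEq_of_mem (hs_open.mem_nhds hu₀) (fun v hv => hconst v hv)
      rw [hev.deriv_eq]
      exact deriv_const u₀ (β u₀)
    exact hne u₀ hu₀ hder0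
  -- set up the planar functions
  set A : ℝ := β p 0 with hAdef
  set B' : ℝ := β p 1 with hBdef
  have hK : 0 < A ^ 2 + B' ^ 2 := lt_of_le_of_ne (by positivity) (Ne.symm hrp)
  set F : ℝ → ℝ := fun u => B' * β u 0 - A * β u 1 with hFdef
  set G : ℝ → ℝ := fun u => A * β u 0 + B' * β u 1 with hGdef
  set Q : ℝ → ℝ := fun u => F u ^ 2 + G u ^ 2 with hQdef
  set R : ℝ → ℝ := fun u => F u ^ 2 / Q u with hRdef
  have hQeq : ∀ u, Q u = (A ^ 2 + B' ^ 2) * (β u 0 ^ 2 + β u 1 ^ 2) := by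
    intro u
    rw [hQdef]
    simp only [hFdef, hGdef]
    ring
  have hFd : ∀ u ∈ s, HasDerivAt F (B' * deriv β u 0 - A * deriv β u 1) u := fun u hu =>
    ((hB u hu 0).const_mul B').sub ((hB u hu 1).const_mul A)
  have hGd : ∀ u ∈ s, HasDerivAt G (A * deriv β u 0 + B' * deriv β u 1) u := fun u hu =>
    ((hB u hu 0).const_mul A).add ((hB u hu 1).const_mul B')
  have hcross : ∀ u ∈ s,
      (B' * deriv β u 0 - A * deriv β u 1) * G u = F u * (A * deriv β u 0 + B' * deriv β u 1) := by
    intro u hu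
    simp only [hFdef, hGdef]
    linear_combination (A ^ 2 + B' ^ 2) * hW u hu
  have hRd : ∀ u ∈ s, Q u ≠ 0 → HasDerivAt R 0 u := by
    intro u hu hQ0
    have h1 : HasDerivAt (fun v => F v ^ 2)
        (2 * F u * (B' * deriv β u 0 - A * deriv β u 1)) u := by
      refine ((hFd u hu).fun_pow 2).congr_deriv ?_
      push_cast
      ring
    have h2 : HasDerivAt (fun v => G v ^ 2)
        (2 * G u * (A * deriv β u 0 + B' * deriv β u 1)) u := by
      refine ((hGd u hu).fun_pow 2).congr_deriv ?_
      push_cast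
      ring
    have hQd : HasDerivAt Q
        (2 * F u * (B' * deriv β u 0 - A * deriv β u 1)
          + 2 * G u * (A * deriv β u 0 + B' * deriv β u 1)) u := h1.add h2
    have hdiv := h1.div hQd hQ0
    have : HasDerivAt R ((2 * F u * (B' * deriv β u 0 - A * deriv β u 1) * Q u
        - F u ^ 2 * (2 * F u * (B' * deriv β u 0 - A * deriv β u 1)
          + 2 * G u * (A * deriv β u 0 + B' * deriv β u 1))) / Q u ^ 2) u := hdiv
    convert this using 1
    rw [eq_comm, div_eq_zero_iff]
    left
    rw [hQdef]
    linear_combination (2 * F u * G u) * hcross u hu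
  have hc0 : ∀ u ∈ s, ContinuousAt (fun v => β v 0) u := fun u hu => (hB u hu 0).continuousAt
  have hc1 : ∀ u ∈ s, ContinuousAt (fun v => β v 1) u := fun u hu => (hB u hu 1).continuousAt
  have hFc : ∀ u ∈ s, ContinuousAt F u := fun u hu =>
    (continuousAt_const.mul (hc0 u hu)).sub (continuousAt_const.mul (hc1 u hu))
  have hQc : ∀ u ∈ s, ContinuousAt Q u := fun u hu =>
    ((hFc u hu).pow 2).add
      (((continuousAt_const.mul (hc0 u hu)).add (continuousAt_const.mul (hc1 u hu))).pow 2)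
  have keyQpos : ∀ u ∈ s, Q u ≠ 0 → F u = 0 → ∀ᶠ v in 𝓝 u, F v = 0 := by
    intro u hu hQ0 hF0
    have hmem : {v | Q v ≠ 0} ∩ s ∈ 𝓝 u :=
      Filter.inter_mem ((hQc u hu).preimage_mem_nhds (isOpen_ne.mem_nhds hQ0))
        (hs_open.mem_nhds hu)
    obtain ⟨ε, hε, hball⟩ := Metric.mem_nhds_iff.mp hmem
    have hconstR : ∀ x ∈ Metric.ball u ε, ∀ y ∈ Metric.ball u ε, R x = R y :=
      aux_const (convex_ball u ε) Metric.isOpen_ball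
        (fun x hx => hRd x (hball hx).2 (hball hx).1)
    refine Filter.eventually_of_mem (Metric.ball_mem_nhds u hε) (fun v hv => ?_)
    have hRu : R u = 0 := by rw [hRdef]; simp [hF0]
    have h0 : F v ^ 2 / Q v = 0 := by
      have := (hconstR v hv u (Metric.mem_ball_self hε)).trans hRu
      rwa [hRdef] at this
    rcases div_eq_zero_iff.mp h0 with h | h
    · exact pow_eq_zero_iff (two_ne_zero) |>.mp h
    · exact absurd h (hball hv).1
  set U : Set ℝ := {u | ∀ᶠ v in 𝓝 u, F v = 0} with hUdef
  have hUopen : IsOpen U := isOpen_setOf_eventually_nhds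
  have hFp : F p = 0 := by
    rw [hFdef]
    show B' * β p 0 - A * β p 1 = 0
    rw [← hAdef, ← hBdef]
    ring
  have hQp : Q p ≠ 0 := by
    rw [hQeq p]
    show (A ^ 2 + B' ^ 2) * (β p 0 ^ 2 + β p 1 ^ 2) ≠ 0
    rw [← hAdef, ← hBdef]
    positivity
  have hpU : p ∈ U := keyQpos p hp hQp hFp
  have hclosure : closure U ∩ s ⊆ U := by
    rintro u ⟨hcl, hu⟩
    have hFu : F u = 0 := by
      by_contra hFne
      have hmem : {v | F v ≠ 0} ∈ 𝓝 u :=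
        (hFc u hu).preimage_mem_nhds (isOpen_ne.mem_nhds hFne)
      obtain ⟨v, hvt, hvU⟩ := mem_closure_iff_nhds.mp hcl _ hmem
      exact hvt hvU.self_of_nhds
    by_cases hQ0 : Q u = 0
    swap
    · exact keyQpos u hu hQ0 hFu
    -- Q u = 0 : isolated zero of the horizontal part
    have hb01 : β u 0 = 0 ∧ β u 1 = 0 := by
      have h1 : (A ^ 2 + B' ^ 2) * (β u 0 ^ 2 + β u 1 ^ 2) = 0 := by rw [← hQeq u]; exact hQ0
      have h2 : β u 0 ^ 2 + β u 1 ^ 2 = 0 := by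
        rcases mul_eq_zero.mp h1 with h | h
        · exact absurd h (ne_of_gt hK)
        · exact h
      constructor <;> nlinarith [sq_nonneg (β u 0), sq_nonneg (β u 1)]
    have hd2 : deriv β u 2 = 0 := by
      have hsq : β u 2 ^ 2 = 1 := by
        have h1 := hS u hu
        nlinarith [hb01.1, hb01.2]
      have hbound : ∀ᶠ v in 𝓝 u, β v 2 ^ 2 ≤ 1 :=
        Filter.eventually_of_mem (hs_open.mem_nhds hu)
          (fun v hv => by nlinarith [hS v hv, sq_nonneg (β v 0), sq_nonneg (β v 1)])
      rcases mul_eq_zero.mp (show (β u 2 - 1) * (β u 2 + 1) = 0 by nlinarith) with h | h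
      · have hval : β u 2 = 1 := by linarith
        have hmax : IsLocalMax (fun v => β v 2) u := by
          filter_upwards [hbound] with v hv
          show β v 2 ≤ β u 2
          rw [hval]
          nlinarith [sq_nonneg (β v 2 - 1)]
        have := hmax.deriv_eq_zero
        rwa [(hB u hu 2).deriv] at this
      · have hval : β u 2 = -1 := by linarith
        have hmin : IsLocalMin (fun v => β v 2) u := by
          filter_upwards [hbound] with v hv
          show β u 2 ≤ β v 2
          rw [hval]
          nlinarith [sq_nonneg (β v 2 + 1)]
        have := hmin.deriv_eq_zero
        rwa [(hB u hu 2).deriv] at this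
    have hd01 : 0 < deriv β u 0 ^ 2 + deriv β u 1 ^ 2 := by
      rcases (lt_or_eq_of_le (by positivity : (0:ℝ) ≤ deriv β u 0 ^ 2 + deriv β u 1 ^ 2)) with h | h
      · exact h
      · exfalso
        have hs0 : deriv β u 0 ^ 2 = 0 := by
          have := sq_nonneg (deriv β u 0); have := sq_nonneg (deriv β u 1); linarith
        have hs1 : deriv β u 1 ^ 2 = 0 := by
          have := sq_nonneg (deriv β u 0); have := sq_nonneg (deriv β u 1); linarith
        have h0 : deriv β u 0 = 0 := pow_eq_zero_iff two_ne_zero |>.mp hs0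
        have h1 : deriv β u 1 = 0 := pow_eq_zero_iff two_ne_zero |>.mp hs1
        apply hne u hu
        ext i
        fin_cases i
        · simpa using h0
        · simpa using h1
        · simpa using hd2
    -- slopes
    have hsl0 : Tendsto (slope (fun v => β v 0) u) (𝓝[≠] u) (𝓝 (deriv β u 0)) :=
      hasDerivAt_iff_tendsto_slope.mp (hB u hu 0)
    have hsl1 : Tendsto (slope (fun v => β v 1) u) (𝓝[≠] u) (𝓝 (deriv β u 1)) :=
      hasDerivAt_iff_tendsto_slope.mp (hB u hu 1)
    have hslF : Tendsto (slope F u) (𝓝[≠] u)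
        (𝓝 (B' * deriv β u 0 - A * deriv β u 1)) :=
      hasDerivAt_iff_tendsto_slope.mp (hFd u hu)
    set T : ℝ → ℝ := fun v =>
      slope (fun w => β w 0) u v ^ 2 + slope (fun w => β w 1) u v ^ 2 with hTdef
    have hTt : Tendsto T (𝓝[≠] u) (𝓝 (deriv β u 0 ^ 2 + deriv β u 1 ^ 2)) :=
      (hsl0.pow 2).add (hsl1.pow 2)
    have hTpos : ∀ᶠ v in 𝓝[≠] u, 0 < T v := hTt.eventually (eventually_gt_nhds hd01)
    have e0 : ∀ v, v ≠ u → slope (fun w => β w 0) u v * (v - u) = β v 0 := by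
      intro v hv
      rw [slope_def_field, hb01.1, sub_zero, div_mul_cancel₀ _ (sub_ne_zero.mpr hv)]
    have e1 : ∀ v, v ≠ u → slope (fun w => β w 1) u v * (v - u) = β v 1 := by
      intro v hv
      rw [slope_def_field, hb01.2, sub_zero, div_mul_cancel₀ _ (sub_ne_zero.mpr hv)]
    have eF : ∀ v, v ≠ u → slope F u v * (v - u) = F v := by
      intro v hv
      rw [slope_def_field, hFu, sub_zero, div_mul_cancel₀ _ (sub_ne_zero.mpr hv)]
    have eQ : ∀ v, v ≠ u → Q v = (A ^ 2 + B' ^ 2) * T v * (v - u) ^ 2 := by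
      intro v hv
      rw [hQeq v, ← e0 v hv, ← e1 v hv, hTdef]
      ring
    have hid : ∀ v, v ≠ u → R v = slope F u v ^ 2 / ((A ^ 2 + B' ^ 2) * T v) := by
      intro v hv
      rw [hRdef]
      show F v ^ 2 / Q v = _
      rw [← eF v hv, eQ v hv, mul_pow, mul_div_mul_right _ _ (pow_ne_zero 2 (sub_ne_zero.mpr hv))]
    set L : ℝ := (B' * deriv β u 0 - A * deriv β u 1) ^ 2
      / ((A ^ 2 + B' ^ 2) * (deriv β u 0 ^ 2 + deriv β u 1 ^ 2)) with hLdef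
    have hRt : Tendsto R (𝓝[≠] u) (𝓝 L) := by
      have h2 : Tendsto (fun v => slope F u v ^ 2 / ((A ^ 2 + B' ^ 2) * T v)) (𝓝[≠] u)
          (𝓝 L) := by
        rw [hLdef]
        exact (hslF.pow 2).div (tendsto_const_nhds.mul hTt) (by positivity)
      refine h2.congr' ?_
      filter_upwards [eventually_mem_nhdsWithin] with v hv
      exact (hid v hv).symm
    have hQpos' : ∀ᶠ v in 𝓝[≠] u, 0 < Q v := by
      filter_upwards [hTpos, eventually_mem_nhdsWithin] with v h1 h2
      have hvu : v ≠ u := h2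
      rw [eQ v hvu]
      have hvne : v - u ≠ 0 := sub_ne_zero.mpr hvu
      positivity
    have hmem2 : ({v | 0 < Q v} ∩ s) ∈ 𝓝[≠] u :=
      Filter.inter_mem hQpos' (mem_nhdsWithin_of_mem_nhds (hs_open.mem_nhds hu))
    obtain ⟨ε, hε, hball⟩ := Metric.mem_nhdsWithin_iff.mp hmem2
    have hballIoo : Metric.ball u ε = Set.Ioo (u - ε) (u + ε) := Real.ball_eq_Ioo u ε
    have hsubL : Set.Ioo (u - ε) u ⊆ Metric.ball u ε ∩ {u}ᶜ := by
      intro v hv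
      refine ⟨?_, ?_⟩
      · rw [hballIoo]; exact ⟨hv.1, by linarith [hv.2]⟩
      · exact fun h => absurd (Set.mem_singleton_iff.mp h) (ne_of_lt hv.2)
    have hsubR : Set.Ioo u (u + ε) ⊆ Metric.ball u ε ∩ {u}ᶜ := by
      intro v hv
      refine ⟨?_, ?_⟩
      · rw [hballIoo]; exact ⟨by linarith [hv.1], hv.2⟩
      · exact fun h => absurd (Set.mem_singleton_iff.mp h) (ne_of_gt hv.1)
    have hconstL : ∀ x ∈ Set.Ioo (u - ε) u, ∀ y ∈ Set.Ioo (u - ε) u, R x = R y :=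
      aux_const (convex_Ioo _ _) isOpen_Ioo
        (fun x hx => hRd x (hball (hsubL hx)).2 (hball (hsubL hx)).1.ne')
    have hconstR' : ∀ x ∈ Set.Ioo u (u + ε), ∀ y ∈ Set.Ioo u (u + ε), R x = R y :=
      aux_const (convex_Ioo _ _) isOpen_Ioo
        (fun x hx => hRd x (hball (hsubR hx)).2 (hball (hsubR hx)).1.ne')
    have hxlmem : u - ε / 2 ∈ Set.Ioo (u - ε) u := ⟨by linarith, by linarith⟩
    have hxrmem : u + ε / 2 ∈ Set.Ioo u (u + ε) := ⟨by linarith, by linarith⟩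
    have hLl : R (u - ε / 2) = L := by
      have h1 : Tendsto R (𝓝[<] u) (𝓝 L) :=
        hRt.mono_left (nhdsWithin_mono u (fun v hv => ne_of_lt hv))
      have h2 : Tendsto R (𝓝[<] u) (𝓝 (R (u - ε / 2))) := by
        apply Tendsto.congr' _ tendsto_const_nhds
        filter_upwards [Ioo_mem_nhdsLT_of_mem (⟨by linarith, le_rfl⟩ : u ∈ Set.Ioc (u - ε) u)]
          with v hv
        exact hconstL (u - ε / 2) hxlmem v hv
      exact tendsto_nhds_unique h2 h1
    have hLr : R (u + ε / 2) = L := by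
      have h1 : Tendsto R (𝓝[>] u) (𝓝 L) :=
        hRt.mono_left (nhdsWithin_mono u (fun v hv => ne_of_gt hv))
      have h2 : Tendsto R (𝓝[>] u) (𝓝 (R (u + ε / 2))) := by
        apply Tendsto.congr' _ tendsto_const_nhds
        filter_upwards [Ioo_mem_nhdsGT_of_mem (⟨le_rfl, by linarith⟩ : u ∈ Set.Ico u (u + ε))]
          with v hv
        exact hconstR' (u + ε / 2) hxrmem v hv
      exact tendsto_nhds_unique h2 h1
    obtain ⟨v, hvball, hvU⟩ := mem_closure_iff_nhds.mp hcl _ (Metric.ball_mem_nhds u hε)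
    by_cases hvu : v = u
    · exact hvu ▸ hvU
    · have hvF : F v = 0 := hvU.self_of_nhds
      have hvin : v ∈ {v | 0 < Q v} ∩ s := hball ⟨hvball, by simp [hvu]⟩
      have hRv0 : R v = 0 := by
        rw [hRdef]
        show F v ^ 2 / Q v = 0
        rw [hvF]
        simp
      have hvIoo : v ∈ Set.Ioo (u - ε) (u + ε) := hballIoo ▸ hvball
      have hlim0 : L = 0 := by
        rcases lt_or_gt_of_ne hvu with h | h
        · rw [← hLl, hconstL (u - ε / 2) hxlmem v ⟨hvIoo.1, h⟩, hRv0]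
        · rw [← hLr, hconstR' (u + ε / 2) hxrmem v ⟨h, hvIoo.2⟩, hRv0]
      show ∀ᶠ w in 𝓝 u, F w = 0
      refine Filter.eventually_of_mem (Metric.ball_mem_nhds u hε) (fun w hw => ?_)
      by_cases hwu : w = u
      · rw [hwu]; exact hFu
      · have hwin : w ∈ {v | 0 < Q v} ∩ s := hball ⟨hw, by simp [hwu]⟩
        have hwIoo : w ∈ Set.Ioo (u - ε) (u + ε) := hballIoo ▸ hw
        have hRw : R w = 0 := by
          rcases lt_or_gt_of_ne hwu with h | h
          · exact (hconstL w ⟨hwIoo.1, h⟩ (u - ε / 2) hxlmem).trans (hLl.trans hlim0)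
          · exact (hconstR' w ⟨h, hwIoo.2⟩ (u + ε / 2) hxrmem).trans (hLr.trans hlim0)
        have h0 : F w ^ 2 / Q w = 0 := by rwa [hRdef] at hRw
        rcases div_eq_zero_iff.mp h0 with h | h
        · exact pow_eq_zero_iff (two_ne_zero) |>.mp h
        · exact absurd h hwin.1.ne'
  have hsU : s ⊆ U :=
    (isPreconnected_Ioo).subset_of_closure_inter_subset hUopen ⟨p, hp, hpU⟩ hclosure
  refine ⟨(WithLp.equiv 2 (Fin 3 → ℝ)).symm ![B', -A, 0], ?_, ?_, ?_⟩
  · intro h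
    have h0 : ((WithLp.equiv 2 (Fin 3 → ℝ)).symm ![B', -A, 0] : R3) 0 = (0 : R3) 0 := by rw [h]
    have h1 : ((WithLp.equiv 2 (Fin 3 → ℝ)).symm ![B', -A, 0] : R3) 1 = (0 : R3) 1 := by rw [h]
    simp [WithLp.equiv_symm_apply, PiLp.toLp_apply] at h0 h1
    rw [h0, h1] at hK
    norm_num at hK
  · simp [e3, PiLp.inner_apply, Fin.sum_univ_three, WithLp.equiv_symm_apply, PiLp.toLp_apply]
  · intro u hu
    have hFu : F u = 0 := (hsU hu).self_of_nhds
    rw [hFdef] at hFu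
    simp only [PiLp.inner_apply, Fin.sum_univ_three, WithLp.equiv_symm_apply, PiLp.toLp_apply,
      RCLike.inner_apply, starRingEnd_apply, star_trivial, Matrix.cons_val_zero,
      Matrix.cons_val_one, Matrix.head_cons, Matrix.cons_val_two, Matrix.tail_cons]
    linear_combination hFu
end
end

section
/- Let α, β : (a, b) → ℝ³ be twice differentiable with ‖α'(u)‖ = 1, ‖β(u)‖ = 1, ⟨α'(u), β(u)⟩ = 0, and β'(u) ≠ 0 for all u ∈ (a, b). Suppose that for every u ∈ (a, b) the four equations hold: (i) ⟨α'(u) × β(u), α''(u)⟩ = ⟨α'(u) × β(u), e₃⟩; (ii) ⟨α'(u) × β(u), β''(u)⟩ + ⟨β'(u) × β(u), α''(u)⟩ = ⟨β'(u) × β(u), e₃⟩ + 2⟨α'(u), β'(u)⟩·⟨α'(u) × β(u), e₃⟩; (iii) ⟨β'(u) × β(u), β''(u)⟩ = 2⟨α'(u), β'(u)⟩·⟨β'(u) × β(u), e₃⟩ + ‖β'(u)‖²·⟨α'(u) × β(u), e₃⟩; (iv) ‖β'(u)‖²·⟨β'(u) × β(u), e₃⟩ = 0. Then the ruled surface X(u,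 v) = α(u) + v·β(u) is contained in a plane parallel to the z-axis: there exist a nonzero vector w ∈ ℝ³ with ⟨w, e₃⟩ = 0 and a constant k ∈ ℝ such that ⟨α(u), w⟩ = k and ⟨β(u), w⟩ = 0 for all u ∈ (a, b). -/
noncomputable section
open scoped RealInnerProductSpace

namespace RuledAux

lemma inner_expand (x y : R3) : ⟪x,y⟫ = x 0 * y 0 + x 1 * y 1 + x 2 * y 2 := by
  simp [PiLp.inner_apply, Fin.sum_univ_three]; ring

lemma inner_cross_left (v w : R3) : ⟪cross v w, v⟫ = 0 := by
  rw [inner_expand]; simp [cross]; ring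

lemma inner_cross_right (v w : R3) : ⟪cross v w, w⟫ = 0 := by
  rw [inner_expand]; simp [cross]; ring

lemma lagrange (v w : R3) : ⟪cross v w, cross v w⟫ = ⟪v,v⟫ * ⟪w,w⟫ - ⟪v,w⟫^2 := by
  rw [inner_expand, inner_expand, inner_expand, inner_expand]; simp [cross]; ring

lemma inner_e3_e3 : ⟪(e3 : R3), e3⟫ = 1 := by
  rw [inner_expand]; simp [e3]

lemma expansion (T B x : R3) (hT : ⟪T,T⟫ = 1) (hB : ⟪B,B⟫ = 1) (hTB : ⟪T,B⟫ = 0) :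
    x = ⟪x,T⟫ • T + ⟪x,B⟫ • B + ⟪x, cross T B⟫ • cross T B := by
  set N := cross T B with hN
  have horth : Orthonormal ℝ ![T, B, N] := by
    rw [orthonormal_iff_ite]
    intro i j
    have h1 : ⟪N,N⟫ = 1 := by rw [hN, lagrange, hT, hB, hTB]; ring
    have h2 : ⟪N,T⟫ = 0 := inner_cross_left T B
    have h3 : ⟪N,B⟫ = 0 := inner_cross_right T B
    have h2' : ⟪T,N⟫ = 0 := by rw [real_inner_comm]; exact h2
    have h3' : ⟪B,N⟫ = 0 := by rw [real_inner_comm]; exact h3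
    have hBT : ⟪B,T⟫ = 0 := by rw [real_inner_comm]; exact hTB
    fin_cases i <;> fin_cases j <;>
      simp_all [Matrix.cons_val_zero, Matrix.cons_val_one]
  have hli := horth.linearIndependent
  have hcard : Fintype.card (Fin 3) = Module.finrank ℝ R3 := by simp
  let bas := basisOfLinearIndependentOfCardEqFinrank hli hcard
  have hbas : ⇑bas = ![T, B, N] := coe_basisOfLinearIndependentOfCardEqFinrank hli hcard
  let ob := bas.toOrthonormalBasis (by rw [hbas]; exact horth)
  have hob : ⇑ob = ![T, B, N] := by
    rw [Module.Basis.coe_toOrthonormalBasis, hbas]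
  have := ob.sum_repr' x
  rw [Fin.sum_univ_three] at this
  simp only [hob] at this
  simp only [Matrix.cons_val_zero, Matrix.cons_val_one, Matrix.head_cons, Matrix.cons_val_two,
    Matrix.tail_cons] at this
  rw [show (⟪x,T⟫ : ℝ) = ⟪T,x⟫ from real_inner_comm T x, show (⟪x,B⟫ : ℝ) = ⟪B,x⟫ from
    real_inner_comm B x, show (⟪x,N⟫ : ℝ) = ⟪N,x⟫ from real_inner_comm N x]
  exact this.symm

lemma cross_left_lin (a b c : ℝ) (u v w z : R3) :
    cross (a•u + b•v + c•w) z = a • cross u z + b • cross v z + c • cross w z := by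
  ext i
  fin_cases i <;>
    simp [cross, PiLp.add_apply, PiLp.smul_apply, smul_eq_mul] <;> ring

lemma cross_right_lin (a b c : ℝ) (u v w z : R3) :
    cross z (a•u + b•v + c•w) = a • cross z u + b • cross z v + c • cross z w := by
  ext i
  fin_cases i <;>
    simp [cross, PiLp.add_apply, PiLp.smul_apply, smul_eq_mul] <;> ring

lemma cross_self_eq_zero (v : R3) : cross v v = 0 := by
  ext i; fin_cases i <;> simp [cross] <;> ring

lemma triple1 (T B : R3) : cross (cross T B) B = ⟪T,B⟫ • B - ⟪B,B⟫ • T := by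
  ext i
  fin_cases i <;>
    simp [cross, PiLp.inner_apply, Fin.sum_univ_three, PiLp.sub_apply, PiLp.smul_apply,
      smul_eq_mul, EuclideanSpace.real_norm_sq_eq] <;> ring

lemma triple2 (T B : R3) : cross T (cross T B) = ⟪T,B⟫ • T - ⟪T,T⟫ • B := by
  ext i
  fin_cases i <;>
    simp [cross, PiLp.inner_apply, Fin.sum_univ_three, PiLp.sub_apply, PiLp.smul_apply,
      smul_eq_mul, EuclideanSpace.real_norm_sq_eq] <;> ring

lemma hasDerivAt_comp_apply {f : ℝ → R3} {f' : R3} {u : ℝ} (i : Fin 3)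
    (hf : HasDerivAt f f' u) : HasDerivAt (fun t => f t i) (f' i) u := by
  have := (EuclideanSpace.proj i (𝕜 := ℝ)).hasFDerivAt.comp_hasDerivAt u hf
  exact this

lemma hasDerivAt_cross {f g : ℝ → R3} {f' g' : R3} {u : ℝ}
    (hf : HasDerivAt f f' u) (hg : HasDerivAt g g' u) :
    HasDerivAt (fun t => cross (f t) (g t)) (cross f' (g u) + cross (f u) g') u := by
  have h0 : ∀ i, HasDerivAt (fun t => f t i) (f' i) u := fun i => hasDerivAt_comp_apply i hf
  have h1 : ∀ i, HasDerivAt (fun t => g t i) (g' i) u := fun i => hasDerivAt_comp_apply i hg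
  have k0 : HasDerivAt (fun t => cross (f t) (g t) 0) ((cross f' (g u) + cross (f u) g') 0) u := by
    have e1 : (fun t => cross (f t) (g t) 0) = (fun t => f t 1 * g t 2 - f t 2 * g t 1) := by
      funext t; simp [cross]
    rw [e1]
    refine (((h0 1).mul (h1 2)).sub ((h0 2).mul (h1 1))).congr_deriv ?_
    simp [cross, PiLp.add_apply]; ring
  have k1 : HasDerivAt (fun t => cross (f t) (g t) 1) ((cross f' (g u) + cross (f u) g') 1) u := by
    have e1 : (fun t => cross (f t) (g t) 1) = (fun t => f t 2 * g t 0 - f t 0 * g t 2) := by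
      funext t; simp [cross]
    rw [e1]
    refine (((h0 2).mul (h1 0)).sub ((h0 0).mul (h1 2))).congr_deriv ?_
    simp [cross, PiLp.add_apply]; ring
  have k2 : HasDerivAt (fun t => cross (f t) (g t) 2) ((cross f' (g u) + cross (f u) g') 2) u := by
    have e1 : (fun t => cross (f t) (g t) 2) = (fun t => f t 0 * g t 1 - f t 1 * g t 0) := by
      funext t; simp [cross]
    rw [e1]
    refine (((h0 0).mul (h1 1)).sub ((h0 1).mul (h1 0))).congr_deriv ?_
    simp [cross, PiLp.add_apply]; ring
  have key : ∀ i : Fin 3, HasDerivAt (fun t => cross (f t) (g t) i)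
      ((cross f' (g u) + cross (f u) g') i) u := by
    intro i; fin_cases i; exacts [k0, k1, k2]
  have hpi : HasDerivAt (fun t => (fun i => cross (f t) (g t) i : Fin 3 → ℝ))
      (fun i => (cross f' (g u) + cross (f u) g') i) u := hasDerivAt_pi.2 key
  have he := ((PiLp.continuousLinearEquiv 2 ℝ
    (fun _ : Fin 3 => ℝ)).symm.toContinuousLinearMap).hasFDerivAt.comp_hasDerivAt u hpi
  exact he

lemma diff_pack {f : ℝ → R3} {u : ℝ} (hf : ContDiffAt ℝ 2 f u) :
    HasDerivAt f (deriv f u) u ∧ HasDerivAt (deriv f) (deriv (deriv f) u) u := by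
  obtain ⟨V, hV, hfV⟩ := hf.contDiffOn (le_refl 2) (by norm_num)
  obtain ⟨t, htV, hto, hut⟩ := mem_nhds_iff.1 hV
  have hfa : ContDiffOn ℝ 2 f t := hfV.mono htV
  have h2 : ContDiffOn ℝ 1 (deriv f) t := hfa.deriv_of_isOpen hto (by norm_num)
  have hd1 : DifferentiableAt ℝ f u := hf.differentiableAt (by norm_num)
  have hd2 : DifferentiableAt ℝ (deriv f) u :=
    (h2.differentiableOn (by norm_num)).differentiableAt (hto.mem_nhds hut)
  exact ⟨hd1.hasDerivAt, hd2.hasDerivAt⟩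

lemma deriv_eq_zero_of_const_on {F : ℝ → ℝ} {s : Set ℝ} {c : ℝ} {u : ℝ} {D : ℝ}
    (hs : IsOpen s) (hu : u ∈ s) (hF : ∀ x ∈ s, F x = c) (hD : HasDerivAt F D u) : D = 0 := by
  have hev : F =ᶠ[nhds u] fun _ => c := Filter.eventually_of_mem (hs.mem_nhds hu) hF
  rw [← hD.deriv, hev.deriv_eq, deriv_const]

lemma const_on {E : Type*} [NormedAddCommGroup E] [NormedSpace ℝ E] {f : ℝ → E} {s : Set ℝ}
    (hs : IsOpen s) (hc : Convex ℝ s) (h : ∀ u ∈ s, HasDerivAt f 0 u) {x y : ℝ}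
    (hx : x ∈ s) (hy : y ∈ s) : f x = f y := by
  apply hc.is_const_of_fderivWithin_eq_zero
    (fun u hu => (h u hu).differentiableAt.differentiableWithinAt) ?_ hx hy
  intro u hu
  rw [fderivWithin_of_isOpen hs hu, (h u hu).hasFDerivAt.fderiv]
  ext; simp

lemma cross_left_lin2 (a c : ℝ) (u w z : R3) :
    cross (a•u + c•w) z = a • cross u z + c • cross w z := by
  ext i
  fin_cases i <;>
    simp [cross, PiLp.add_apply, PiLp.smul_apply, smul_eq_mul] <;> ring

lemma cross_right_lin2 (a c : ℝ) (u w z : R3) :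
    cross z (a•u + c•w) = a • cross z u + c • cross z w := by
  ext i
  fin_cases i <;>
    simp [cross, PiLp.add_apply, PiLp.smul_apply, smul_eq_mul] <;> ring

end RuledAux

open RuledAux

set_option maxHeartbeats 1000000

/-- Proposition 2: noncylindrical ruled minimal surfaces in ℝ³ with density e^z
are contained in planes parallel to the z-axis. -/
theorem noncylindrical_ruled_minimal_is_plane
    (a b : ℝ) (α β : ℝ → R3)
    (hα : ∀ u ∈ Set.Ioo a b, ContDiffAt ℝ 2 α u)
    (hβ : ∀ u ∈ Set.Ioo a b, ContDiffAt ℝ 2 β u)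
    (hspeed : ∀ u ∈ Set.Ioo a b, ‖deriv α u‖ = 1)
    (hunit : ∀ u ∈ Set.Ioo a b, ‖β u‖ = 1)
    (horth : ∀ u ∈ Set.Ioo a b, ⟪deriv α u, β u⟫ = 0)
    (hne : ∀ u ∈ Set.Ioo a b, deriv β u ≠ 0)
    (heq1 : ∀ u ∈ Set.Ioo a b,
      ⟪cross (deriv α u) (β u), deriv (deriv α) u⟫ = ⟪cross (deriv α u) (β u), e3⟫)
    (heq2 : ∀ u ∈ Set.Ioo a b,
      ⟪cross (deriv α u) (β u), deriv (deriv β) u⟫ +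
          ⟪cross (deriv β u) (β u), deriv (deriv α) u⟫ =
        ⟪cross (deriv β u) (β u), e3⟫ +
          2 * ⟪deriv α u, deriv β u⟫ * ⟪cross (deriv α u) (β u), e3⟫)
    (heq3 : ∀ u ∈ Set.Ioo a b,
      ⟪cross (deriv β u) (β u), deriv (deriv β) u⟫ =
        2 * ⟪deriv α u, deriv β u⟫ * ⟪cross (deriv β u) (β u), e3⟫ +
          ‖deriv β u‖ ^ 2 * ⟪cross (deriv α u) (β u), e3⟫)
    (heq4 : ∀ u ∈ Set.Ioo a b,
      ‖deriv β u‖ ^ 2 * ⟪cross (deriv β u) (β u), e3⟫ = 0) :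
    ∃ w : R3, w ≠ 0 ∧ ⟪w, e3⟫ = 0 ∧ ∃ k : ℝ,
      ∀ u ∈ Set.Ioo a b, ⟪α u, w⟫ = k ∧ ⟪β u, w⟫ = 0 := by
  by_cases hab : a < b
  case neg =>
    refine ⟨(WithLp.equiv 2 (Fin 3 → ℝ)).symm ![1,0,0], ?_, ?_, 0, ?_⟩
    · intro h
      have := congrArg (fun v : R3 => v 0) h
      simp at this
    · rw [inner_expand]; simp [e3]
    · intro u hu
      exact absurd (lt_trans hu.1 hu.2) hab
  case pos =>
  have key : ∀ u ∈ Set.Ioo a b,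
      HasDerivAt (fun t => ⟪deriv β t, cross (deriv α t) (β t)⟫) 0 u ∧
      (∃ p', HasDerivAt (fun t => ⟪deriv β t, deriv α t⟫) p' u ∧
          ⟪deriv β u, cross (deriv α u) (β u)⟫ * p' = 0) ∧
      ⟪deriv β u, deriv α u⟫ * ⟪cross (deriv α u) (β u), e3⟫
          = ⟪deriv β u, cross (deriv α u) (β u)⟫ * ⟪deriv α u, e3⟫ ∧
      HasDerivAt (fun t => ⟪deriv α t, e3⟫)
          (-(⟪deriv β u, deriv α u⟫ * ⟪β u, e3⟫) + ⟪cross (deriv α u) (β u), e3⟫^2) u ∧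
      HasDerivAt (fun t => ⟪β t, e3⟫)
          (⟪deriv β u, deriv α u⟫ * ⟪deriv α u, e3⟫
            + ⟪deriv β u, cross (deriv α u) (β u)⟫ * ⟪cross (deriv α u) (β u), e3⟫) u ∧
      HasDerivAt (fun t => ⟪cross (deriv α t) (β t), e3⟫)
          (-(⟪cross (deriv α u) (β u), e3⟫ * ⟪deriv α u, e3⟫)
            - ⟪deriv β u, cross (deriv α u) (β u)⟫ * ⟪β u, e3⟫) u ∧
      ⟪deriv α u, e3⟫^2 + ⟪β u, e3⟫^2 + ⟪cross (deriv α u) (β u), e3⟫^2 = 1 ∧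
      ⟪deriv β u, deriv α u⟫^2 + ⟪deriv β u, cross (deriv α u) (β u)⟫^2 ≠ 0 ∧
      HasDerivAt (fun t => cross (deriv α t) (β t))
          (-(⟪cross (deriv α u) (β u), e3⟫ • deriv α u)
            - ⟪deriv β u, cross (deriv α u) (β u)⟫ • β u) u := by
    intro u hu
    obtain ⟨hαd, hαd2⟩ := diff_pack (hα u hu)
    obtain ⟨hβd, hβd2⟩ := diff_pack (hβ u hu)
    have c1 : ⟪deriv α u, deriv α u⟫ = 1 := by
      rw [real_inner_self_eq_norm_sq, hspeed u hu]; norm_num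
    have c2 : ⟪β u, β u⟫ = 1 := by
      rw [real_inner_self_eq_norm_sq, hunit u hu]; norm_num
    have c3 : ⟪deriv α u, β u⟫ = 0 := horth u hu
    have c3' : ⟪β u, deriv α u⟫ = 0 := by rw [real_inner_comm]; exact c3
    have hnd : HasDerivAt (fun t => cross (deriv α t) (β t))
        (cross (deriv (deriv α) u) (β u) + cross (deriv α u) (deriv β u)) u :=
      hasDerivAt_cross hαd2 hβd
    have c4 : ⟪deriv (deriv α) u, deriv α u⟫ = 0 := by
      have h := HasDerivAt.inner ℝ hαd2 hαd2
      have h0 := deriv_eq_zero_of_const_on (c := 1) isOpen_Ioo hu (fun x hx => by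
        rw [real_inner_self_eq_norm_sq, hspeed x hx]; norm_num) h
      have hc := real_inner_comm (deriv (deriv α) u) (deriv α u)
      linarith
    have c4' : ⟪deriv α u, deriv (deriv α) u⟫ = 0 := by rw [real_inner_comm]; exact c4
    have c5 : ⟪deriv β u, β u⟫ = 0 := by
      have h := HasDerivAt.inner ℝ hβd hβd
      have h0 := deriv_eq_zero_of_const_on (c := 1) isOpen_Ioo hu (fun x hx => by
        rw [real_inner_self_eq_norm_sq, hunit x hx]; norm_num) h
      have hc := real_inner_comm (deriv β u) (β u)
      linarith
    have c6 : ⟪deriv α u, deriv β u⟫ + ⟪deriv (deriv α) u, β u⟫ = 0 := by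
      have h := HasDerivAt.inner ℝ hαd2 hβd
      have h0 := deriv_eq_zero_of_const_on (c := 0) isOpen_Ioo hu (fun x hx => horth x hx) h
      linarith
    have pcomm : ⟪deriv α u, deriv β u⟫ = ⟪deriv β u, deriv α u⟫ :=
      real_inner_comm _ _
    have nT : ⟪cross (deriv α u) (β u), deriv α u⟫ = 0 := inner_cross_left _ _
    have nT' : ⟪deriv α u, cross (deriv α u) (β u)⟫ = 0 := by rw [real_inner_comm]; exact nT
    have nB : ⟪cross (deriv α u) (β u), β u⟫ = 0 := inner_cross_right _ _
    have nB' : ⟪β u, cross (deriv α u) (β u)⟫ = 0 := by rw [real_inner_comm]; exact nB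
    have nN : ⟪cross (deriv α u) (β u), cross (deriv α u) (β u)⟫ = 1 := by
      rw [lagrange, c1, c2, c3]; ring
    have eB1 : deriv β u = ⟪deriv β u, deriv α u⟫ • deriv α u
        + ⟪deriv β u, cross (deriv α u) (β u)⟫ • cross (deriv α u) (β u) := by
      have h := expansion _ _ (deriv β u) c1 c2 c3
      rwa [c5, zero_smul, add_zero] at h
    have eA2 : deriv (deriv α) u = ⟪deriv (deriv α) u, β u⟫ • β u
        + ⟪deriv (deriv α) u, cross (deriv α u) (β u)⟫ • cross (deriv α u) (β u) := by
      have h := expansion _ _ (deriv (deriv α) u) c1 c2 c3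
      rwa [c4, zero_smul, zero_add] at h
    have crossNB : cross (cross (deriv α u) (β u)) (β u) = -(deriv α u) := by
      rw [triple1, c2, c3]; simp
    have crossTN : cross (deriv α u) (cross (deriv α u) (β u)) = -(β u) := by
      rw [triple2, c1, c3]; simp
    have eB1B : cross (deriv β u) (β u)
        = ⟪deriv β u, deriv α u⟫ • cross (deriv α u) (β u)
          - ⟪deriv β u, cross (deriv α u) (β u)⟫ • deriv α u := by
      conv_lhs => rw [eB1]
      rw [cross_left_lin2, crossNB]
      simp [smul_neg, sub_eq_add_neg]
    have h4 : ⟪cross (deriv β u) (β u), e3⟫ = 0 :=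
      (mul_eq_zero.1 (heq4 u hu)).resolve_left
        (pow_ne_zero 2 (norm_ne_zero_iff.2 (hne u hu)))
    have k3 : ⟪deriv β u, deriv α u⟫ * ⟪cross (deriv α u) (β u), e3⟫
        = ⟪deriv β u, cross (deriv α u) (β u)⟫ * ⟪deriv α u, e3⟫ := by
      rw [eB1B] at h4
      simp only [inner_sub_left, real_inner_smul_left] at h4
      linarith
    have d_eq : ⟪cross (deriv α u) (β u), deriv (deriv α) u⟫
        = ⟪cross (deriv α u) (β u), e3⟫ := heq1 u hu
    have cA2B : ⟪deriv (deriv α) u, β u⟫ = -⟪deriv β u, deriv α u⟫ := by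
      rw [← pcomm]; linarith
    -- value of ⟪N, B₂⟫ from equation (ii)
    have iNB2 : ⟪cross (deriv α u) (β u), deriv (deriv β) u⟫
        = ⟪deriv β u, deriv α u⟫ * ⟪cross (deriv α u) (β u), e3⟫ := by
      have h2 := heq2 u hu
      rw [h4, eB1B] at h2
      simp only [inner_sub_left, real_inner_smul_left] at h2
      rw [d_eq, show ⟪deriv α u, deriv (deriv α) u⟫ = 0 from c4', pcomm] at h2
      linarith
    -- q * ⟪T, B₂⟫ from equation (iii)
    have normB1 : ‖deriv β u‖^2 = ⟪deriv β u, deriv α u⟫^2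
        + ⟪deriv β u, cross (deriv α u) (β u)⟫^2 := by
      rw [← real_inner_self_eq_norm_sq]
      conv_lhs => rw [eB1]
      simp only [inner_add_left, inner_add_right, real_inner_smul_left, real_inner_smul_right,
        c1, c3, c3', nT, nT', nB, nB', nN]
      ring
    have qTB2 : ⟪deriv β u, cross (deriv α u) (β u)⟫ * ⟪deriv α u, deriv (deriv β) u⟫
        = -(⟪deriv β u, cross (deriv α u) (β u)⟫^2 * ⟪cross (deriv α u) (β u), e3⟫) := by
      have h3 := heq3 u hu
      rw [h4, eB1B, normB1] at h3
      simp only [inner_sub_left, real_inner_smul_left] at h3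
      rw [iNB2] at h3
      linarith [h3]
    -- derivative of n as a vector
    have en' : cross (deriv (deriv α) u) (β u) + cross (deriv α u) (deriv β u)
        = -(⟪cross (deriv α u) (β u), e3⟫ • deriv α u)
          - ⟪deriv β u, cross (deriv α u) (β u)⟫ • β u := by
      conv_lhs => rw [eA2, eB1]
      rw [cross_left_lin2, cross_right_lin2, crossNB, crossTN, cross_self_eq_zero,
        cross_self_eq_zero]
      have hd : ⟪deriv (deriv α) u, cross (deriv α u) (β u)⟫
          = ⟪cross (deriv α u) (β u), e3⟫ := by rw [real_inner_comm]; exact d_eq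
      rw [hd]
      simp [smul_neg, sub_eq_add_neg]
    have K9 : HasDerivAt (fun t => cross (deriv α t) (β t))
        (-(⟪cross (deriv α u) (β u), e3⟫ • deriv α u)
          - ⟪deriv β u, cross (deriv α u) (β u)⟫ • β u) u := en' ▸ hnd
    refine ⟨?_, ?_, k3, ?_, ?_, ?_, ?_, ?_, K9⟩
    · -- K1 : q' = 0
      have h := HasDerivAt.inner ℝ hβd2 hnd
      refine h.congr_deriv ?_
      rw [en']
      simp only [inner_sub_right, inner_neg_right, real_inner_smul_right, c5]
      have hcomm : ⟪deriv (deriv β) u, cross (deriv α u) (β u)⟫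
          = ⟪cross (deriv α u) (β u), deriv (deriv β) u⟫ := real_inner_comm _ _
      rw [hcomm, iNB2]
      ring
    · -- K2 : q * p' = 0
      refine ⟨_, HasDerivAt.inner ℝ hβd2 hαd2, ?_⟩
      have hB1A2 : ⟪deriv β u, deriv (deriv α) u⟫
          = ⟪deriv β u, cross (deriv α u) (β u)⟫ * ⟪cross (deriv α u) (β u), e3⟫ := by
        conv_lhs => rw [eB1]
        simp only [inner_add_left, real_inner_smul_left, c4']
        have : ⟪cross (deriv α u) (β u), deriv (deriv α) u⟫
            = ⟪cross (deriv α u) (β u), e3⟫ := d_eq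
        rw [this]; ring
      have hcomm : ⟪deriv (deriv β) u, deriv α u⟫ = ⟪deriv α u, deriv (deriv β) u⟫ :=
        real_inner_comm _ _
      rw [hB1A2, hcomm]
      nlinarith [qTB2]
    · -- K4 : t3'
      have h := HasDerivAt.inner ℝ hαd2 (hasDerivAt_const u (e3 : R3))
      refine h.congr_deriv ?_
      have hA2e3 : ⟪deriv (deriv α) u, e3⟫
          = -(⟪deriv β u, deriv α u⟫ * ⟪β u, e3⟫) + ⟪cross (deriv α u) (β u), e3⟫^2 := by
        conv_lhs => rw [eA2]
        simp only [inner_add_left, real_inner_smul_left]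
        rw [cA2B]
        have hd : ⟪deriv (deriv α) u, cross (deriv α u) (β u)⟫
            = ⟪cross (deriv α u) (β u), e3⟫ := by rw [real_inner_comm]; exact d_eq
        rw [hd]; ring
      simp [hA2e3]
    · -- K5 : b3'
      have h := HasDerivAt.inner ℝ hβd (hasDerivAt_const u (e3 : R3))
      refine h.congr_deriv ?_
      have hB1e3 : ⟪deriv β u, e3⟫ = ⟪deriv β u, deriv α u⟫ * ⟪deriv α u, e3⟫
          + ⟪deriv β u, cross (deriv α u) (β u)⟫ * ⟪cross (deriv α u) (β u), e3⟫ := by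
        conv_lhs => rw [eB1]
        simp only [inner_add_left, real_inner_smul_left]
      simp [hB1e3]
    · -- K6 : n3'
      have h := HasDerivAt.inner ℝ hnd (hasDerivAt_const u (e3 : R3))
      refine h.congr_deriv ?_
      rw [en']
      simp only [inner_sub_left, inner_neg_left, real_inner_smul_left, inner_zero_right]
      ring
    · -- K7 : parseval
      have e := expansion _ _ (e3 : R3) c1 c2 c3
      have h7 : (1:ℝ) = ⟪(⟪(e3:R3),deriv α u⟫ • deriv α u + ⟪(e3:R3),β u⟫ • β u
          + ⟪(e3:R3), cross (deriv α u) (β u)⟫ • cross (deriv α u) (β u) : R3), e3⟫ := by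
        rw [← e, inner_e3_e3]
      simp only [inner_add_left, real_inner_smul_left] at h7
      rw [show ⟪(e3:R3), deriv α u⟫ = ⟪deriv α u, (e3:R3)⟫ from real_inner_comm _ _,
        show ⟪(e3:R3), β u⟫ = ⟪β u, (e3:R3)⟫ from real_inner_comm _ _,
        show ⟪(e3:R3), cross (deriv α u) (β u)⟫ = ⟪cross (deriv α u) (β u), (e3:R3)⟫ from
          real_inner_comm _ _] at h7
      nlinarith [h7]
    · -- K8
      rw [← normB1]
      exact pow_ne_zero 2 (norm_ne_zero_iff.2 (hne u hu))
  -- Global argument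
  set S := Set.Ioo a b with hS_def
  have hSopen : IsOpen S := isOpen_Ioo
  have hSconv : Convex ℝ S := convex_Ioo a b
  set u₀ := (a+b)/2 with hu₀_def
  have hu₀ : u₀ ∈ S := ⟨by linarith, by linarith⟩
  have qconst : ∀ u ∈ S, ⟪deriv β u, cross (deriv α u) (β u)⟫
      = ⟪deriv β u₀, cross (deriv α u₀) (β u₀)⟫ := by
    intro u hu
    exact const_on hSopen hSconv (fun x hx => (key x hx).1) hu hu₀
  -- q ≡ 0
  have hq0 : ⟪deriv β u₀, cross (deriv α u₀) (β u₀)⟫ = 0 := by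
    by_contra hq0ne
    have qne : ∀ u ∈ S, ⟪deriv β u, cross (deriv α u) (β u)⟫ ≠ 0 := by
      intro u hu h; rw [qconst u hu] at h; exact hq0ne h
    have hp0 : ∀ u ∈ S, HasDerivAt (fun t => ⟪deriv β t, deriv α t⟫) 0 u := by
      intro u hu
      obtain ⟨p', hp', hqp'⟩ := (key u hu).2.1
      have : p' = 0 := by
        rcases mul_eq_zero.1 hqp' with h | h
        · exact absurd h (qne u hu)
        · exact h
      rwa [this] at hp'
    have tz : ∀ u ∈ S, ⟪deriv α u, e3⟫ = 0 ∧ ⟪cross (deriv α u) (β u), e3⟫ = 0 := by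
      intro u hu
      obtain ⟨K1, -, K3, K4, K5, K6, K7, K8, K9⟩ := key u hu
      have hg : HasDerivAt (fun t => ⟪deriv β t, deriv α t⟫ * ⟪cross (deriv α t) (β t), e3⟫
          - ⟪deriv β t, cross (deriv α t) (β t)⟫ * ⟪deriv α t, e3⟫)
          (0 * ⟪cross (deriv α u) (β u), e3⟫ + ⟪deriv β u, deriv α u⟫ *
              (-(⟪cross (deriv α u) (β u), e3⟫ * ⟪deriv α u, e3⟫)
                - ⟪deriv β u, cross (deriv α u) (β u)⟫ * ⟪β u, e3⟫)
            - (0 * ⟪deriv α u, e3⟫ + ⟪deriv β u, cross (deriv α u) (β u)⟫ *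
              (-(⟪deriv β u, deriv α u⟫ * ⟪β u, e3⟫)
                + ⟪cross (deriv α u) (β u), e3⟫^2))) u :=
        ((hp0 u hu).mul K6).sub (K1.mul K4)
      have hDzero := deriv_eq_zero_of_const_on (c := 0) isOpen_Ioo hu (fun x hx => by
        rw [(key x hx).2.2.1]; ring) hg
      have ht : ⟪deriv α u, e3⟫^2 + ⟪cross (deriv α u) (β u), e3⟫^2 = 0 := by
        have hqne := qne u hu
        have h1 : ⟪deriv β u, cross (deriv α u) (β u)⟫ *
            (⟪deriv α u, e3⟫^2 + ⟪cross (deriv α u) (β u), e3⟫^2) = 0 := by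
          linear_combination (-⟪deriv α u, e3⟫) * K3 - hDzero
        rcases mul_eq_zero.1 h1 with h | h
        · exact absurd h hqne
        · exact h
      constructor <;> nlinarith [ht, sq_nonneg ⟪deriv α u, e3⟫,
        sq_nonneg ⟪cross (deriv α u) (β u), e3⟫]
    have bz : ∀ u ∈ S, ⟪β u, e3⟫ = 0 := by
      intro u hu
      obtain ⟨K1, -, K3, K4, K5, K6, K7, K8, K9⟩ := key u hu
      have hDzero := deriv_eq_zero_of_const_on (c := 0) isOpen_Ioo hu
        (fun x hx => (tz x hx).2) K6
      have h1 := (tz u hu).1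
      have h2 := (tz u hu).2
      have hqne := qne u hu
      rw [h1, h2] at hDzero
      simp at hDzero
      rcases hDzero with h | h
      · exact absurd h hqne
      · exact h
    obtain ⟨-, -, -, -, -, -, K7, -, -⟩ := key u₀ hu₀
    rw [(tz u₀ hu₀).1, (tz u₀ hu₀).2, bz u₀ hu₀] at K7
    norm_num at K7
  have qz : ∀ u ∈ S, ⟪deriv β u, cross (deriv α u) (β u)⟫ = 0 := by
    intro u hu; rw [qconst u hu, hq0]
  have n3z : ∀ u ∈ S, ⟪cross (deriv α u) (β u), e3⟫ = 0 := by
    intro u hu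
    obtain ⟨-, -, K3, -, -, -, -, K8, -⟩ := key u hu
    rw [qz u hu] at K3 K8
    have hp : ⟪deriv β u, deriv α u⟫ ≠ 0 := by
      intro h; rw [h] at K8; norm_num at K8
    rcases mul_eq_zero.1 (by linarith [K3] : ⟪deriv β u, deriv α u⟫ *
        ⟪cross (deriv α u) (β u), e3⟫ = 0) with h | h
    · exact absurd h hp
    · exact h
  have hn0 : ∀ u ∈ S, HasDerivAt (fun t => cross (deriv α t) (β t)) 0 u := by
    intro u hu
    have K9 := (key u hu).2.2.2.2.2.2.2.2
    rw [n3z u hu, qz u hu] at K9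
    simpa using K9
  refine ⟨cross (deriv α u₀) (β u₀), ?_, n3z u₀ hu₀, ⟪α u₀, cross (deriv α u₀) (β u₀)⟫, ?_⟩
  · -- w ≠ 0
    intro h
    have c1 : ⟪deriv α u₀, deriv α u₀⟫ = 1 := by
      rw [real_inner_self_eq_norm_sq, hspeed u₀ hu₀]; norm_num
    have c2 : ⟪β u₀, β u₀⟫ = 1 := by
      rw [real_inner_self_eq_norm_sq, hunit u₀ hu₀]; norm_num
    have nN : ⟪cross (deriv α u₀) (β u₀), cross (deriv α u₀) (β u₀)⟫ = 1 := by
      rw [lagrange, c1, c2, horth u₀ hu₀]; ring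
    rw [h] at nN
    simp at nN
  · intro u hu
    have nconst : cross (deriv α u) (β u) = cross (deriv α u₀) (β u₀) :=
      const_on hSopen hSconv hn0 hu hu₀
    constructor
    · -- ⟪α u, w⟫ = k
      have hA0 : ∀ x ∈ S, HasDerivAt (fun t => ⟪α t, cross (deriv α u₀) (β u₀)⟫) 0 x := by
        intro x hx
        have hαd := (diff_pack (hα x hx)).1
        have h := HasDerivAt.inner ℝ hαd (hasDerivAt_const x (cross (deriv α u₀) (β u₀)))
        have hnconst : cross (deriv α x) (β x) = cross (deriv α u₀) (β u₀) :=
          const_on hSopen hSconv hn0 hx hu₀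
        have hv : ⟪α x, (0:R3)⟫ + ⟪deriv α x, cross (deriv α u₀) (β u₀)⟫ = 0 := by
          rw [← hnconst, inner_zero_right, zero_add, real_inner_comm]
          exact inner_cross_left (deriv α x) (β x)
        rwa [hv] at h
      exact const_on hSopen hSconv hA0 hu hu₀
    · -- ⟪β u, w⟫ = 0
      rw [← nconst, real_inner_comm]
      exact inner_cross_right (deriv α u) (β u)
end
end

section
/- Let β ∈ ℝ³ be a constant unit vector and let α : ℝ → ℝ³ be twice differentiable with ‖α'(u)‖ = 1 and ⟨α'(u), β⟩ = 0 for all u ∈ ℝ. If ⟨α'(u) × β, α''(u)⟩ = ⟨α'(u) × β, e₃⟩ for all u ∈ ℝ, then α''(u) + ⟨e₃, α'(u)⟩·α'(u) = e₃ − ⟨e₃, β⟩·β for all u ∈ ℝ. -/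
noncomputable section
open scoped RealInnerProductSpace

/-- Equation (10): the ODE satisfied by the base curve of a cylindrical ruled
minimal surface in ℝ³ with density e^z. -/
theorem cylindrical_base_curve_ode
    (β : R3) (hβ : ‖β‖ = 1) (α : ℝ → R3) (hα : ContDiff ℝ 2 α)
    (hspeed : ∀ u, ‖deriv α u‖ = 1)
    (horth : ∀ u, ⟪deriv α u, β⟫ = 0)
    (hmin : ∀ u, ⟪cross (deriv α u) β, deriv (deriv α) u⟫ = ⟪cross (deriv α u) β, e3⟫) :
    ∀ u, deriv (deriv α) u + ⟪e3, deriv α u⟫ • deriv α u = e3 - ⟪e3, β⟫ • β := by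
  have hd1 : ContDiff ℝ 1 (deriv α) := by
    have h2 : ContDiff ℝ (1 + 1) α := by exact_mod_cast hα
    exact (contDiff_succ_iff_deriv.mp h2).2.2
  have hd : Differentiable ℝ (deriv α) := hd1.differentiable one_ne_zero
  intro u
  have hTT : ⟪deriv α u, deriv α u⟫ = 1 := by
    rw [real_inner_self_eq_norm_mul_norm, hspeed u]; norm_num
  have hBB : ⟪β, β⟫ = 1 := by
    rw [real_inner_self_eq_norm_mul_norm, hβ]; norm_num
  have haT : ⟪deriv (deriv α) u, deriv α u⟫ = 0 := by
    have h1 : HasDerivAt (fun v => ⟪deriv α v, deriv α v⟫)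
        (⟪deriv α u, deriv (deriv α) u⟫ + ⟪deriv (deriv α) u, deriv α u⟫) u :=
      ((hd u).hasDerivAt).inner ℝ ((hd u).hasDerivAt)
    have h2 : (fun v => ⟪deriv α v, deriv α v⟫) = fun _ : ℝ => (1:ℝ) := by
      funext v; rw [real_inner_self_eq_norm_mul_norm, hspeed v]; norm_num
    rw [h2] at h1
    have h3 := h1.deriv
    rw [deriv_const] at h3
    have h4 : ⟪deriv α u, deriv (deriv α) u⟫ = ⟪deriv (deriv α) u, deriv α u⟫ :=
      real_inner_comm _ _
    linarith [h3.symm, h4]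
  have haB : ⟪deriv (deriv α) u, β⟫ = 0 := by
    have h1 : HasDerivAt (fun v => ⟪deriv α v, β⟫)
        (⟪deriv α u, (0:R3)⟫ + ⟪deriv (deriv α) u, β⟫) u :=
      ((hd u).hasDerivAt).inner ℝ (hasDerivAt_const u β)
    have h2 : (fun v => ⟪deriv α v, β⟫) = fun _ : ℝ => (0:ℝ) := by
      funext v; exact horth v
    rw [h2] at h1
    have h3 := h1.deriv
    rw [deriv_const] at h3
    simpa using h3.symm
  have hm := hmin u
  have hOB := horth u
  ext i
  fin_cases i
  · simp only [cross, e3, PiLp.inner_apply, RCLike.inner_apply, conj_trivial, Fin.zero_eta, Fin.mk_one, Fin.reduceFinMk, Fin.sum_univ_three, WithLp.equiv_symm_apply, WithLp.ofLp_toLp, Matrix.cons_val_zero, Matrix.cons_val_one, Matrix.head_cons, Matrix.cons_val_two, Matrix.tail_cons, PiLp.add_apply, PiLp.sub_apply, PiLp.smul_apply, smul_eq_mul, Fin.isValue, mul_zero, mul_one, zero_mul, one_mul, zero_add, add_zero] at hTT hBB haT haB hm hOB ⊢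
    linear_combination ((deriv α u 1*β 2-deriv α u 2*β 1)) * hm + ((β 0)*(1+(deriv α u 0*deriv α u 0+deriv α u 1*deriv α u 1+deriv α u 2*deriv α u 2-1)) - (deriv α u 0)*(deriv α u 0*β 0+deriv α u 1*β 1+deriv α u 2*β 2)) * haB + ((deriv α u 0)*(1+(β 0*β 0+β 1*β 1+β 2*β 2-1)) - (β 0)*(deriv α u 0*β 0+deriv α u 1*β 1+deriv α u 2*β 2)) * haT + (-(β 2)*(β 0) + (0 - (deriv (deriv α) u 0))*(1+(β 0*β 0+β 1*β 1+β 2*β 2-1))) * hTT + (-(deriv α u 2)*(deriv α u 0) + (0 - (deriv (deriv α) u 0))) * hBB + ((deriv α u 2)*(β 0) + (β 2)*(deriv α u 0) - (deriv α u 0*β 0+deriv α u 1*β 1+deriv α u 2*β 2)*(0 - (deriv (deriv α) u 0))) * hOB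
  · simp only [cross, e3, PiLp.inner_apply, RCLike.inner_apply, conj_trivial, Fin.zero_eta, Fin.mk_one, Fin.reduceFinMk, Fin.sum_univ_three, WithLp.equiv_symm_apply, WithLp.ofLp_toLp, Matrix.cons_val_zero, Matrix.cons_val_one, Matrix.head_cons, Matrix.cons_val_two, Matrix.tail_cons, PiLp.add_apply, PiLp.sub_apply, PiLp.smul_apply, smul_eq_mul, Fin.isValue, mul_zero, mul_one, zero_mul, one_mul, zero_add, add_zero] at hTT hBB haT haB hm hOB ⊢
    linear_combination ((deriv α u 2*β 0-deriv α u 0*β 2)) * hm + ((β 1)*(1+(deriv α u 0*deriv α u 0+deriv α u 1*deriv α u 1+deriv α u 2*deriv α u 2-1)) - (deriv α u 1)*(deriv α u 0*β 0+deriv α u 1*β 1+deriv α u 2*β 2)) * haB + ((deriv α u 1)*(1+(β 0*β 0+β 1*β 1+β 2*β 2-1)) - (β 1)*(deriv α u 0*β 0+deriv α u 1*β 1+deriv α u 2*β 2)) * haT + (-(β 2)*(β 1) + (0 - (deriv (deriv α) u 1))*(1+(β 0*β 0+β 1*β 1+β 2*β 2-1))) * hTT + (-(deriv α u 2)*(deriv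 α u 1) + (0 - (deriv (deriv α) u 1))) * hBB + ((deriv α u 2)*(β 1) + (β 2)*(deriv α u 1) - (deriv α u 0*β 0+deriv α u 1*β 1+deriv α u 2*β 2)*(0 - (deriv (deriv α) u 1))) * hOB
  · simp only [cross, e3, PiLp.inner_apply, RCLike.inner_apply, conj_trivial, Fin.zero_eta, Fin.mk_one, Fin.reduceFinMk, Fin.sum_univ_three, WithLp.equiv_symm_apply, WithLp.ofLp_toLp, Matrix.cons_val_zero, Matrix.cons_val_one, Matrix.head_cons, Matrix.cons_val_two, Matrix.tail_cons, PiLp.add_apply, PiLp.sub_apply, PiLp.smul_apply, smul_eq_mul, Fin.isValue, mul_zero, mul_one, zero_mul, one_mul, zero_add, add_zero] at hTT hBB haT haB hm hOB ⊢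
    linear_combination ((deriv α u 0*β 1-deriv α u 1*β 0)) * hm + ((β 2)*(1+(deriv α u 0*deriv α u 0+deriv α u 1*deriv α u 1+deriv α u 2*deriv α u 2-1)) - (deriv α u 2)*(deriv α u 0*β 0+deriv α u 1*β 1+deriv α u 2*β 2)) * haB + ((deriv α u 2)*(1+(β 0*β 0+β 1*β 1+β 2*β 2-1)) - (β 2)*(deriv α u 0*β 0+deriv α u 1*β 1+deriv α u 2*β 2)) * haT + (-(β 2)*(β 2) + (1 - (deriv (deriv α) u 2))*(1+(β 0*β 0+β 1*β 1+β 2*β 2-1))) * hTT + (-(deriv α u 2)*(deriv α u 2) + (1 - (deriv (deriv α) u 2))) * hBB + ((deriv α u 2)*(β 2) + (β 2)*(deriv α u 2) - (deriv α u 0*β 0+deriv α u 1*β 1+deriv α u 2*β 2)*(1 - (deriv (deriv α) u 2))) * hOB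
end
end

section
/- Let β = (0, 0, 1) or β = (0, 0, −1), and let α : ℝ → ℝ³ be twice differentiable with ‖α'(u)‖ = 1, ⟨α'(u), β⟩ = 0, and ⟨α'(u) × β, α''(u)⟩ = ⟨α'(u) × β, e₃⟩ for all u ∈ ℝ. Then α''(u) = 0 for all u, i.e. α is a straight line, and the ruled surface X(u, v) = α(u) + v·β is contained in a plane parallel to the z-axis. -/
noncomputable section
open scoped RealInnerProductSpace

lemma inner_three (x y : R3) : ⟪x, y⟫ = x 0 * y 0 + x 1 * y 1 + x 2 * y 2 := by
  simp [PiLp.inner_apply, Fin.sum_univ_three, RCLike.inner_apply, mul_comm]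

lemma e3_0 : e3 0 = 0 := rfl
lemma e3_1 : e3 1 = 0 := rfl
lemma e3_2 : e3 2 = 1 := rfl

lemma cross_0 (v w : R3) : cross v w 0 = v 1 * w 2 - v 2 * w 1 := rfl
lemma cross_1 (v w : R3) : cross v w 1 = v 2 * w 0 - v 0 * w 2 := rfl
lemma cross_2 (v w : R3) : cross v w 2 = v 0 * w 1 - v 1 * w 0 := rfl

/-- Proposition 3: if the rulings are vertical, a cylindrical ruled minimal surface
in ℝ³ with density e^z is a plane parallel to the z-axis. -/
theorem vertical_rulings_give_plane
    (β : R3) (hβ : β = e3 ∨ β = -e3) (α : ℝ → R3) (hα : ContDiff ℝ 2 α)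
    (hspeed : ∀ u, ‖deriv α u‖ = 1)
    (horth : ∀ u, ⟪deriv α u, β⟫ = 0)
    (hmin : ∀ u, ⟪cross (deriv α u) β, deriv (deriv α) u⟫ = ⟪cross (deriv α u) β, e3⟫) :
    (∀ u, deriv (deriv α) u = 0) ∧
      ∃ w : R3, w ≠ 0 ∧ ⟪w, e3⟫ = 0 ∧ ∃ k : ℝ,
        ∀ u v : ℝ, ⟪α u + v • β, w⟫ = k := by
  -- β has components (0, 0, s) with s = ±1
  obtain ⟨s, hs, hβ0, hβ1, hβ2⟩ : ∃ s : ℝ, s ^ 2 = 1 ∧ β 0 = 0 ∧ β 1 = 0 ∧ β 2 = s := by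
    rcases hβ with h | h <;> subst h
    · exact ⟨1, by norm_num, rfl, rfl, rfl⟩
    · exact ⟨-1, by norm_num, by simp [e3], by simp [e3], by simp [e3]⟩
  have hs0 : s ≠ 0 := by intro h; rw [h] at hs; norm_num at hs
  -- differentiability facts
  have hdd := (contDiff_succ_iff_deriv (n := 1)).mp (by exact_mod_cast hα)
  have hd1 : Differentiable ℝ α := hdd.1
  have hd2 : Differentiable ℝ (deriv α) := hdd.2.2.differentiable one_ne_zero
  -- key derivative computations, for each u
  have hb : ∀ u, ⟪deriv (deriv α) u, β⟫ = 0 := by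
    intro u
    have h1 : HasDerivAt (fun t => ⟪deriv α t, β⟫)
        (⟪deriv α u, (0 : R3)⟫ + ⟪deriv (deriv α) u, β⟫) u :=
      HasDerivAt.inner ℝ ((hd2 u).hasDerivAt) (hasDerivAt_const u β)
    have h2 : (fun t => ⟪deriv α t, β⟫) = fun _ => (0 : ℝ) := funext horth
    rw [h2] at h1
    have := h1.unique (hasDerivAt_const u 0)
    simpa using this
  have hab : ∀ u, ⟪deriv α u, deriv (deriv α) u⟫ = 0 := by
    intro u
    have h1 : HasDerivAt (fun t => ⟪deriv α t, deriv α t⟫)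
        (⟪deriv α u, deriv (deriv α) u⟫ + ⟪deriv (deriv α) u, deriv α u⟫) u :=
      HasDerivAt.inner ℝ ((hd2 u).hasDerivAt) ((hd2 u).hasDerivAt)
    have h2 : (fun t => ⟪deriv α t, deriv α t⟫) = fun _ => (1 : ℝ) := by
      funext t
      rw [real_inner_self_eq_norm_sq, hspeed t]; norm_num
    rw [h2] at h1
    have h3 := h1.unique (hasDerivAt_const u 1)
    linarith [real_inner_comm (deriv α u) (deriv (deriv α) u)]
  -- second derivative vanishes
  have hvanish : ∀ u, deriv (deriv α) u = 0 := by
    intro u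
    set a := deriv α u with ha
    set b := deriv (deriv α) u with hbb
    have e1 : a 0 * b 0 + a 1 * b 1 + a 2 * b 2 = 0 := by
      have := hab u; rwa [inner_three] at this
    have e2 : b 2 * s = 0 := by
      have := hb u; rw [inner_three, hβ0, hβ1, hβ2] at this; linarith
    have eb2 : b 2 = 0 := by
      rcases mul_eq_zero.mp e2 with h | h
      · exact h
      · exact absurd h hs0
    have e3' : a 2 * s = 0 := by
      have := horth u; rw [inner_three, hβ0, hβ1, hβ2] at this; linarith
    have ea2 : a 2 = 0 := by
      rcases mul_eq_zero.mp e3' with h | h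
      · exact h
      · exact absurd h hs0
    have enorm : a 0 ^ 2 + a 1 ^ 2 + a 2 ^ 2 = 1 := by
      have h := hspeed u
      have : ⟪a, a⟫ = 1 := by rw [real_inner_self_eq_norm_sq, h]; norm_num
      rw [inner_three] at this; ring_nf; ring_nf at this; linarith
    have emin := hmin u
    simp only [← ha, ← hbb] at emin
    rw [inner_three, inner_three, cross_0, cross_1, cross_2, hβ0, hβ1, hβ2,
      e3_0, e3_1, e3_2] at emin
    -- emin : (a1*s - a2*0)*b0 + ... = ...
    have e4 : s * (a 1 * b 0 - a 0 * b 1) = 0 := by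
      rw [ea2] at emin; ring_nf at emin ⊢; linarith
    have e5 : a 1 * b 0 - a 0 * b 1 = 0 := by
      rcases mul_eq_zero.mp e4 with h | h
      · exact absurd h hs0
      · exact h
    have hb0 : b 0 = 0 := by
      have : b 0 * (a 0 ^ 2 + a 1 ^ 2 + a 2 ^ 2) = 0 := by
        have : b 0 * (a 0 ^ 2 + a 1 ^ 2 + a 2 ^ 2)
            = a 0 * (a 0 * b 0 + a 1 * b 1 + a 2 * b 2) + a 1 * (a 1 * b 0 - a 0 * b 1)
              + b 0 * a 2 ^ 2 - a 0 * a 2 * b 2 := by ring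
        rw [this, e1, e5, ea2, eb2]; ring
      rw [enorm] at this; linarith
    have hb1 : b 1 = 0 := by
      have : b 1 * (a 0 ^ 2 + a 1 ^ 2 + a 2 ^ 2) = 0 := by
        have : b 1 * (a 0 ^ 2 + a 1 ^ 2 + a 2 ^ 2)
            = a 1 * (a 0 * b 0 + a 1 * b 1 + a 2 * b 2) - a 0 * (a 1 * b 0 - a 0 * b 1)
              + b 1 * a 2 ^ 2 - a 1 * a 2 * b 2 := by ring
        rw [this, e1, e5, ea2, eb2]; ring
      rw [enorm] at this; linarith
    ext i
    fin_cases i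
    · exact hb0
    · exact hb1
    · exact eb2
  refine ⟨hvanish, ?_⟩
  -- deriv α is constant
  have hconst : ∀ u, deriv α u = deriv α 0 := fun u =>
    is_const_of_deriv_eq_zero hd2 hvanish u 0
  set a := deriv α 0 with ha
  set w : R3 := cross a β with hw
  have ea2 : a 2 = 0 := by
    have := horth 0; rw [inner_three, hβ0, hβ1, hβ2] at this
    rcases mul_eq_zero.mp (by linarith : a 2 * s = 0) with h | h
    · exact h
    · exact absurd h hs0
  have enorm : a 0 ^ 2 + a 1 ^ 2 + a 2 ^ 2 = 1 := by
    have h := hspeed 0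
    have : ⟪a, a⟫ = 1 := by rw [real_inner_self_eq_norm_sq, h]; norm_num
    rw [inner_three] at this; ring_nf; ring_nf at this; linarith
  have hw0 : w 0 = a 1 * s := by rw [hw, cross_0, hβ1, hβ2, ea2]; ring
  have hw1 : w 1 = -(a 0 * s) := by rw [hw, cross_1, hβ0, hβ2]; ring
  have hw2 : w 2 = 0 := by rw [hw, cross_2, hβ0, hβ1]; ring
  refine ⟨w, ?_, ?_, ⟪α 0, w⟫, ?_⟩
  · intro h
    have h0 : w 0 = 0 := by rw [h]; rfl
    have h1 : w 1 = 0 := by rw [h]; rfl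
    rw [hw0] at h0; rw [hw1] at h1
    have ha1 : a 1 = 0 := by
      rcases mul_eq_zero.mp h0 with h | h
      · exact h
      · exact absurd h hs0
    have ha0 : a 0 = 0 := by
      rcases mul_eq_zero.mp (by linarith : a 0 * s = 0) with h | h
      · exact h
      · exact absurd h hs0
    rw [ha0, ha1, ea2] at enorm; norm_num at enorm
  · rw [inner_three, e3_0, e3_1, e3_2, hw2]; ring
  · have haw : ⟪a, w⟫ = 0 := by
      rw [inner_three, hw0, hw1, hw2, ea2]; ring
    have hβw : ⟪β, w⟫ = 0 := by
      rw [inner_three, hβ0, hβ1, hβ2, hw2]; ring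
    have hαw : ∀ u, ⟪α u, w⟫ = ⟪α 0, w⟫ := by
      have hdiff : Differentiable ℝ (fun t => ⟪α t, w⟫) :=
        fun t => (DifferentiableAt.inner ℝ (hd1 t) (differentiableAt_const w))
      have hder : ∀ t, deriv (fun t => ⟪α t, w⟫) t = 0 := by
        intro t
        have h1 : HasDerivAt (fun t => ⟪α t, w⟫)
            (⟪α t, (0 : R3)⟫ + ⟪deriv α t, w⟫) t :=
          HasDerivAt.inner ℝ ((hd1 t).hasDerivAt) (hasDerivAt_const t w)
        rw [h1.deriv, hconst t, haw]; simp
      exact fun u => is_const_of_deriv_eq_zero hdiff hder u 0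
    intro u v
    rw [inner_add_left, inner_smul_left, hβw, hαw u]
    simp
end
end

section
/- Fix A > 0 and define x, z : ℝ → ℝ by x(u) = 2·arctan(√A·e^u) and z(u) = log(e^{−u} + A·e^{u}). Then for every u ∈ ℝ: (a) x'(u)² + z'(u)² = 1; (b) x''(u) + x'(u)·z'(u) = 0; (c) z''(u) + z'(u)² = 1; and (d) the curve α(u) = (x(u), 0, z(u)) together with β = (0, ε, 0), ε ∈ {−1, 1}, satisfies ⟨α'(u), β⟩ = 0 and the minimality equation ⟨α'(u) × β, α''(u)⟩ = ⟨α'(u) × β, e₃⟩. -/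
noncomputable section
open scoped RealInnerProductSpace

/-- Proposition 4: the explicit cylindrical ruled minimal surfaces with rulings
β = (0, ±1, 0) in ℝ³ with density e^z. -/
theorem explicit_surface_horizontal_ruling
    (A : ℝ) (hA : 0 < A) (x z : ℝ → ℝ)
    (hx : ∀ u, x u = 2 * Real.arctan (Real.sqrt A * Real.exp u))
    (hz : ∀ u, z u = Real.log (Real.exp (-u) + A * Real.exp u))
    (ε : ℝ) (hε : ε = 1 ∨ ε = -1)
    (α : ℝ → R3)
    (hα : ∀ u, α u = (WithLp.equiv 2 (Fin 3 → ℝ)).symm ![x u, 0, z u])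
    (β : R3) (hβ : β = (WithLp.equiv 2 (Fin 3 → ℝ)).symm ![0, ε, 0]) :
    ∀ u : ℝ,
      deriv x u ^ 2 + deriv z u ^ 2 = 1 ∧
      deriv (deriv x) u + deriv x u * deriv z u = 0 ∧
      deriv (deriv z) u + deriv z u ^ 2 = 1 ∧
      ⟪deriv α u, β⟫ = 0 ∧
      ⟪cross (deriv α u) β, deriv (deriv α) u⟫ = ⟪cross (deriv α u) β, e3⟫ := by
  have hxfun : x = fun u => 2 * Real.arctan (Real.sqrt A * Real.exp u) := funext hx
  have hzfun : z = fun u => Real.log (Real.exp (-u) + A * Real.exp u) := funext hz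
  set s := Real.sqrt A with hsdef
  have hs2 : s ^ 2 = A := Real.sq_sqrt hA.le
  have hs0 : 0 < s := Real.sqrt_pos.2 hA
  set f : ℝ → ℝ := fun u => 2 * s * Real.exp u / (1 + A * Real.exp u ^ 2) with hf
  set g : ℝ → ℝ := fun u =>
    (A * Real.exp u - Real.exp (-u)) / (Real.exp (-u) + A * Real.exp u) with hg
  have hP : ∀ u : ℝ, (0:ℝ) < 1 + A * Real.exp u ^ 2 := fun u => by positivity
  have hD : ∀ u : ℝ, (0:ℝ) < Real.exp (-u) + A * Real.exp u := fun u => by positivity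
  have hexpneg : ∀ u : ℝ, HasDerivAt (fun u : ℝ => Real.exp (-u)) (-Real.exp (-u)) u := by
    intro u
    have := (Real.hasDerivAt_exp (-u)).comp u ((hasDerivAt_id u).neg)
    simpa [Function.comp_def] using this
  -- first derivatives
  have hx' : ∀ u, HasDerivAt x (f u) u := by
    intro u
    rw [hxfun]
    have h1 : HasDerivAt (fun u => s * Real.exp u) (s * Real.exp u) u :=
      (Real.hasDerivAt_exp u).const_mul s
    have h2 := (Real.hasDerivAt_arctan (s * Real.exp u)).comp u h1
    have h3 : HasDerivAt (fun u => 2 * Real.arctan (s * Real.exp u))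
        (2 * (1 / (1 + (s * Real.exp u) ^ 2) * (s * Real.exp u))) u := h2.const_mul 2
    have hval : f u = 2 * (1 / (1 + (s * Real.exp u) ^ 2) * (s * Real.exp u)) := by
      rw [hf]
      simp only
      rw [mul_pow, hs2]
      have := (hP u).ne'
      field_simp
    rw [hval]
    exact h3
  have hz' : ∀ u, HasDerivAt z (g u) u := by
    intro u
    rw [hzfun]
    have h1 : HasDerivAt (fun u => Real.exp (-u) + A * Real.exp u)
        (A * Real.exp u - Real.exp (-u)) u := by
      have hb : HasDerivAt (fun u : ℝ => A * Real.exp u) (A * Real.exp u) u :=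
        (Real.hasDerivAt_exp u).const_mul A
      have h := (hexpneg u).add hb
      have hval : A * Real.exp u - Real.exp (-u) = -Real.exp (-u) + A * Real.exp u := by ring
      rw [hval]; exact h
    exact h1.log (hD u).ne'
  -- second derivatives
  have hx'' : ∀ u, HasDerivAt f (-(f u * g u)) u := by
    intro u
    have hnum : HasDerivAt (fun u => 2 * s * Real.exp u) (2 * s * Real.exp u) u :=
      (Real.hasDerivAt_exp u).const_mul (2 * s)
    have hsq : HasDerivAt (fun u : ℝ => Real.exp u ^ 2) (2 * Real.exp u * Real.exp u) u := by
      have := (Real.hasDerivAt_exp u).pow 2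
      simpa [mul_comm, Pi.pow_def] using this
    have hden : HasDerivAt (fun u => 1 + A * Real.exp u ^ 2)
        (A * (2 * Real.exp u * Real.exp u)) u := (hsq.const_mul A).const_add 1
    have h := hnum.div hden (hP u).ne'
    have hval : -(f u * g u) =
        (2 * s * Real.exp u * (1 + A * Real.exp u ^ 2) -
          2 * s * Real.exp u * (A * (2 * Real.exp u * Real.exp u))) /
          (1 + A * Real.exp u ^ 2) ^ 2 := by
      rw [hf, hg]
      simp only
      have h1 := (hP u).ne'
      have h2 := (hD u).ne'
      have h3 := (Real.exp_pos u).ne'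
      rw [Real.exp_neg] at h2 ⊢
      field_simp
      ring
    rw [hval]
    exact h
  have hz'' : ∀ u, HasDerivAt g (1 - g u ^ 2) u := by
    intro u
    have hb : HasDerivAt (fun u : ℝ => A * Real.exp u) (A * Real.exp u) u :=
      (Real.hasDerivAt_exp u).const_mul A
    have hnum : HasDerivAt (fun u => A * Real.exp u - Real.exp (-u))
        (Real.exp (-u) + A * Real.exp u) u := by
      have h := hb.sub (hexpneg u)
      have hval : Real.exp (-u) + A * Real.exp u = A * Real.exp u - -Real.exp (-u) := by ring
      rw [hval]; exact h
    have hden : HasDerivAt (fun u => Real.exp (-u) + A * Real.exp u)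
        (-Real.exp (-u) + A * Real.exp u) u := (hexpneg u).add hb
    have h := hnum.div hden (hD u).ne'
    have hval : 1 - g u ^ 2 =
        ((Real.exp (-u) + A * Real.exp u) * (Real.exp (-u) + A * Real.exp u) -
          (A * Real.exp u - Real.exp (-u)) * (-Real.exp (-u) + A * Real.exp u)) /
          (Real.exp (-u) + A * Real.exp u) ^ 2 := by
      rw [hg]
      simp only
      have h2 := (hD u).ne'
      field_simp
      ring
    rw [hval]
    exact h
  have hdx : deriv x = f := funext fun u => (hx' u).deriv
  have hdz : deriv z = g := funext fun u => (hz' u).deriv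
  -- vector setup
  set E0 : R3 := (WithLp.equiv 2 (Fin 3 → ℝ)).symm ![1, 0, 0] with hE0
  set E2 : R3 := (WithLp.equiv 2 (Fin 3 → ℝ)).symm ![0, 0, 1] with hE2
  have hαfun : α = fun u => x u • E0 + z u • E2 := by
    funext u
    rw [hα u]
    ext i
    fin_cases i <;>
      simp [hE0, hE2, WithLp.equiv_symm_apply, PiLp.toLp_apply]
  have hα' : ∀ u, HasDerivAt α (f u • E0 + g u • E2) u := by
    intro u
    rw [hαfun]
    exact ((hx' u).smul_const E0).add ((hz' u).smul_const E2)
  have hdα : deriv α = fun u => f u • E0 + g u • E2 := funext fun u => (hα' u).deriv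
  have hα'' : ∀ u, HasDerivAt (deriv α) ((-(f u * g u)) • E0 + (1 - g u ^ 2) • E2) u := by
    intro u
    rw [hdα]
    exact ((hx'' u).smul_const E0).add ((hz'' u).smul_const E2)
  have hddα : deriv (deriv α) = fun u => (-(f u * g u)) • E0 + (1 - g u ^ 2) • E2 :=
    funext fun u => (hα'' u).deriv
  -- scalar identity (a)
  have key : ∀ u, f u ^ 2 + g u ^ 2 = 1 := by
    intro u
    rw [hf, hg]
    simp only
    have h1 := (hP u).ne'
    have h2 := (hD u).ne'
    have h3 := (Real.exp_pos u).ne'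
    rw [Real.exp_neg] at h2 ⊢
    field_simp
    ring_nf
    rw [hs2]
    ring
  intro u
  refine ⟨?_, ?_, ?_, ?_, ?_⟩
  · rw [hdx, hdz]; exact key u
  · rw [hdx, hdz, funext fun u => (hx'' u).deriv]; ring
  · rw [hdz, funext fun u => (hz'' u).deriv]; ring
  · rw [hdα, hβ]
    simp [PiLp.inner_apply, RCLike.inner_apply, conj_trivial, Fin.sum_univ_three, hE0, hE2, WithLp.equiv_symm_apply, PiLp.toLp_apply]
  · rw [hddα, hdα, hβ]
    simp only [cross, e3, PiLp.inner_apply, RCLike.inner_apply, conj_trivial, Fin.sum_univ_three, PiLp.add_apply,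
      PiLp.smul_apply, smul_eq_mul, hE0, hE2, WithLp.equiv_symm_apply, PiLp.toLp_apply,
      Matrix.cons_val_zero, Matrix.cons_val_one, Matrix.head_cons,
      Matrix.cons_val_two, Matrix.tail_cons]
    ring
end
end

section
/- Let b, c ∈ ℝ with b ≠ 0 and b² + c² = 1, and fix A > 0. Define x, y, z : ℝ → ℝ by x(u) = (2/b)·arctan(√A·e^{bu}), z(u) = log(e^{−bu} + A·e^{bu}), y(u) = −(c/b)·z(u), and set α(u) = (x(u), y(u), z(u)) and β = (0, b, c). Then for every u ∈ ℝ: (a) ‖α'(u)‖ = 1 and ⟨α'(u), β⟩ = 0; (b) x''(u) + x'(u)·z'(u) = 0; (c) y''(u) + y'(u)·z'(u) = −c·b; (d) z''(u) + z'(u)² = b²; and (e) ⟨α'(u) × β, α''(u)⟩ = ⟨α'(u) × β, e₃⟩. -/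
noncomputable section
open scoped RealInnerProductSpace

/-- Componentwise differentiation for curves in `R3`. -/
lemma hasDerivAt_R3 {f₀ f₁ f₂ : ℝ → ℝ} {d₀ d₁ d₂ : ℝ} {u : ℝ}
    (h₀ : HasDerivAt f₀ d₀ u) (h₁ : HasDerivAt f₁ d₁ u) (h₂ : HasDerivAt f₂ d₂ u) :
    HasDerivAt (fun t => (WithLp.equiv 2 (Fin 3 → ℝ)).symm ![f₀ t, f₁ t, f₂ t] : ℝ → R3)
      ((WithLp.equiv 2 (Fin 3 → ℝ)).symm ![d₀, d₁, d₂]) u := by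
  have h : HasDerivAt (fun t => ![f₀ t, f₁ t, f₂ t] : ℝ → (Fin 3 → ℝ)) ![d₀, d₁, d₂] u := by
    rw [hasDerivAt_pi]
    intro i
    fin_cases i <;> simpa
  have := ((PiLp.continuousLinearEquiv 2 ℝ (fun _ : Fin 3 => ℝ)).symm
      : (Fin 3 → ℝ) →L[ℝ] R3).hasFDerivAt.comp_hasDerivAt u h
  exact this

/-- Scalar norm identity. -/
lemma aux_norm (b c A s E D : ℝ) (hb : b ≠ 0) (hbc : b ^ 2 + c ^ 2 = 1) (hs : s ^ 2 = A)
    (hD : D = 1 + A * E ^ 2) (hDne : D ≠ 0) :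
    (2 * s * E / D) ^ 2 + (-(c / b) * (b * (A * E ^ 2 - 1) / D)) ^ 2
      + (b * (A * E ^ 2 - 1) / D) ^ 2 = 1 := by
  have hX2 : (2 * s * E / D) ^ 2 = 4 * A * E ^ 2 / D ^ 2 := by
    rw [div_pow]; congr 1; linear_combination 4 * E ^ 2 * hs
  have hY2 : (-(c / b) * (b * (A * E ^ 2 - 1) / D)) ^ 2
      = c ^ 2 * (A * E ^ 2 - 1) ^ 2 / D ^ 2 := by
    field_simp
  have hZ2 : (b * (A * E ^ 2 - 1) / D) ^ 2 = b ^ 2 * (A * E ^ 2 - 1) ^ 2 / D ^ 2 := by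
    rw [div_pow]; ring
  rw [hX2, hY2, hZ2, ← add_div, ← add_div,
    show 4 * A * E ^ 2 + c ^ 2 * (A * E ^ 2 - 1) ^ 2 + b ^ 2 * (A * E ^ 2 - 1) ^ 2 = D ^ 2 by
      rw [hD]; linear_combination (A * E ^ 2 - 1) ^ 2 * hbc,
    div_self (pow_ne_zero 2 hDne)]

/-- Proposition 5: the explicit family (17) of cylindrical ruled minimal surfaces
with ruling β = (0, b, c) in ℝ³ with density e^z. -/
theorem explicit_surface_general_ruling
    (b c : ℝ) (hb : b ≠ 0) (hbc : b ^ 2 + c ^ 2 = 1) (A : ℝ) (hA : 0 < A)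
    (x y z : ℝ → ℝ)
    (hx : ∀ u, x u = (2 / b) * Real.arctan (Real.sqrt A * Real.exp (b * u)))
    (hz : ∀ u, z u = Real.log (Real.exp (-(b * u)) + A * Real.exp (b * u)))
    (hy : ∀ u, y u = -(c / b) * z u)
    (α : ℝ → R3)
    (hα : ∀ u, α u = (WithLp.equiv 2 (Fin 3 → ℝ)).symm ![x u, y u, z u])
    (β : R3) (hβ : β = (WithLp.equiv 2 (Fin 3 → ℝ)).symm ![0, b, c]) :
    ∀ u : ℝ,
      ‖deriv α u‖ = 1 ∧
      ⟪deriv α u, β⟫ = 0 ∧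
      deriv (deriv x) u + deriv x u * deriv z u = 0 ∧
      deriv (deriv y) u + deriv y u * deriv z u = -(c * b) ∧
      deriv (deriv z) u + deriv z u ^ 2 = b ^ 2 ∧
      ⟪cross (deriv α u) β, deriv (deriv α) u⟫ = ⟪cross (deriv α u) β, e3⟫ := by
  have hsA : Real.sqrt A ^ 2 = A := Real.sq_sqrt hA.le
  have hxf : x = fun u => (2 / b) * Real.arctan (Real.sqrt A * Real.exp (b * u)) := funext hx
  have hzf : z = fun u => Real.log (Real.exp (-(b * u)) + A * Real.exp (b * u)) := funext hz
  have hyf : y = fun u => -(c / b) * z u := funext hy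
  have hαf : α = fun u => (WithLp.equiv 2 (Fin 3 → ℝ)).symm ![x u, y u, z u] := funext hα
  have hbd : ∀ t : ℝ, HasDerivAt (fun t : ℝ => b * t) b t := fun t => by
    simpa using (hasDerivAt_id t).const_mul b
  have hDpos : ∀ t : ℝ, (0:ℝ) < 1 + A * Real.exp (b * t) ^ 2 := fun t => by positivity
  -- first derivatives
  have hxd : ∀ t, HasDerivAt x
      (2 * Real.sqrt A * Real.exp (b * t) / (1 + A * Real.exp (b * t) ^ 2)) t := by
    intro t
    rw [hxf]
    have h2 := ((Real.hasDerivAt_arctan (Real.sqrt A * Real.exp (b * t))).comp t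
      (((hbd t).exp).const_mul (Real.sqrt A))).const_mul (2 / b)
    refine h2.congr_deriv ?_
    rw [mul_pow, hsA]
    have := (hDpos t).ne'
    field_simp
  have hzd : ∀ t, HasDerivAt z
      (b * (A * Real.exp (b * t) ^ 2 - 1) / (1 + A * Real.exp (b * t) ^ 2)) t := by
    intro t
    rw [hzf]
    have hgpos : (0:ℝ) < Real.exp (-(b * t)) + A * Real.exp (b * t) := by positivity
    have hg : HasDerivAt (fun t => Real.exp (-(b * t)) + A * Real.exp (b * t))
        (Real.exp (-(b * t)) * (-b) + A * (Real.exp (b * t) * b)) t :=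
      (((hbd t).neg).exp).add (((hbd t).exp).const_mul A)
    have h3 := hg.log hgpos.ne'
    convert h3 using 1
    rw [Real.exp_neg]
    have h4 := (Real.exp_pos (b * t)).ne'
    have := (hDpos t).ne'
    field_simp
    ring
  have hyd : ∀ t, HasDerivAt y
      (-(c / b) * (b * (A * Real.exp (b * t) ^ 2 - 1) / (1 + A * Real.exp (b * t) ^ 2))) t := by
    intro t
    rw [hyf]
    exact (hzd t).const_mul _
  have hαd : ∀ t, HasDerivAt α ((WithLp.equiv 2 (Fin 3 → ℝ)).symm
      ![2 * Real.sqrt A * Real.exp (b * t) / (1 + A * Real.exp (b * t) ^ 2),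
        -(c / b) * (b * (A * Real.exp (b * t) ^ 2 - 1) / (1 + A * Real.exp (b * t) ^ 2)),
        b * (A * Real.exp (b * t) ^ 2 - 1) / (1 + A * Real.exp (b * t) ^ 2)]) t := by
    intro t
    rw [hαf]
    exact hasDerivAt_R3 (hxd t) (hyd t) (hzd t)
  have hdx : deriv x = fun t =>
      2 * Real.sqrt A * Real.exp (b * t) / (1 + A * Real.exp (b * t) ^ 2) :=
    funext fun t => (hxd t).deriv
  have hdz : deriv z = fun t =>
      b * (A * Real.exp (b * t) ^ 2 - 1) / (1 + A * Real.exp (b * t) ^ 2) :=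
    funext fun t => (hzd t).deriv
  have hdy : deriv y = fun t =>
      -(c / b) * (b * (A * Real.exp (b * t) ^ 2 - 1) / (1 + A * Real.exp (b * t) ^ 2)) :=
    funext fun t => (hyd t).deriv
  have hdα : deriv α = fun t => (WithLp.equiv 2 (Fin 3 → ℝ)).symm
      ![2 * Real.sqrt A * Real.exp (b * t) / (1 + A * Real.exp (b * t) ^ 2),
        -(c / b) * (b * (A * Real.exp (b * t) ^ 2 - 1) / (1 + A * Real.exp (b * t) ^ 2)),
        b * (A * Real.exp (b * t) ^ 2 - 1) / (1 + A * Real.exp (b * t) ^ 2)] :=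
    funext fun t => (hαd t).deriv
  -- second derivatives (raw, about the explicit functions)
  have hX2raw : ∀ t, HasDerivAt
      (fun t => 2 * Real.sqrt A * Real.exp (b * t) / (1 + A * Real.exp (b * t) ^ 2))
      (2 * Real.sqrt A * b * Real.exp (b * t) * (1 - A * Real.exp (b * t) ^ 2)
        / (1 + A * Real.exp (b * t) ^ 2) ^ 2) t := by
    intro t
    have hnum : HasDerivAt (fun t => 2 * Real.sqrt A * Real.exp (b * t))
        (2 * Real.sqrt A * (Real.exp (b * t) * b)) t := ((hbd t).exp).const_mul _
    have hden : HasDerivAt (fun t => 1 + A * Real.exp (b * t) ^ 2)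
        (A * (2 * Real.exp (b * t) ^ 1 * (Real.exp (b * t) * b))) t :=
      ((((hbd t).exp).pow 2).const_mul A).const_add 1
    have h := hnum.div hden (hDpos t).ne'
    refine h.congr_deriv ?_
    have := (hDpos t).ne'
    ring
  have hZ2raw : ∀ t, HasDerivAt
      (fun t => b * (A * Real.exp (b * t) ^ 2 - 1) / (1 + A * Real.exp (b * t) ^ 2))
      (4 * A * b ^ 2 * Real.exp (b * t) ^ 2 / (1 + A * Real.exp (b * t) ^ 2) ^ 2) t := by
    intro t
    have hnum : HasDerivAt (fun t => b * (A * Real.exp (b * t) ^ 2 - 1))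
        (b * (A * (2 * Real.exp (b * t) ^ 1 * (Real.exp (b * t) * b)))) t :=
      (((((hbd t).exp).pow 2).const_mul A).sub_const 1).const_mul b
    have hden : HasDerivAt (fun t => 1 + A * Real.exp (b * t) ^ 2)
        (A * (2 * Real.exp (b * t) ^ 1 * (Real.exp (b * t) * b))) t :=
      ((((hbd t).exp).pow 2).const_mul A).const_add 1
    have h := hnum.div hden (hDpos t).ne'
    refine h.congr_deriv ?_
    have := (hDpos t).ne'
    ring
  have hxd2 : ∀ t, HasDerivAt (deriv x)
      (2 * Real.sqrt A * b * Real.exp (b * t) * (1 - A * Real.exp (b * t) ^ 2)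
        / (1 + A * Real.exp (b * t) ^ 2) ^ 2) t := fun t => by
    rw [hdx]; exact hX2raw t
  have hzd2 : ∀ t, HasDerivAt (deriv z)
      (4 * A * b ^ 2 * Real.exp (b * t) ^ 2 / (1 + A * Real.exp (b * t) ^ 2) ^ 2) t := fun t => by
    rw [hdz]; exact hZ2raw t
  have hyd2 : ∀ t, HasDerivAt (deriv y)
      (-(c / b) * (4 * A * b ^ 2 * Real.exp (b * t) ^ 2
        / (1 + A * Real.exp (b * t) ^ 2) ^ 2)) t := fun t => by
    rw [hdy]; exact (hZ2raw t).const_mul _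
  have hαd2 : ∀ t, HasDerivAt (deriv α) ((WithLp.equiv 2 (Fin 3 → ℝ)).symm
      ![2 * Real.sqrt A * b * Real.exp (b * t) * (1 - A * Real.exp (b * t) ^ 2)
          / (1 + A * Real.exp (b * t) ^ 2) ^ 2,
        -(c / b) * (4 * A * b ^ 2 * Real.exp (b * t) ^ 2
          / (1 + A * Real.exp (b * t) ^ 2) ^ 2),
        4 * A * b ^ 2 * Real.exp (b * t) ^ 2 / (1 + A * Real.exp (b * t) ^ 2) ^ 2]) t := by
    intro t
    rw [hdα]
    exact hasDerivAt_R3 (hX2raw t) ((hZ2raw t).const_mul _) (hZ2raw t)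
  -- now fix u
  intro u
  set E : ℝ := Real.exp (b * u) with hE
  set D : ℝ := 1 + A * E ^ 2 with hD
  have hDne : D ≠ 0 := (hDpos u).ne'
  have dxu : deriv x u = 2 * Real.sqrt A * E / D := (hxd u).deriv
  have dzu : deriv z u = b * (A * E ^ 2 - 1) / D := (hzd u).deriv
  have dyu : deriv y u = -(c / b) * (b * (A * E ^ 2 - 1) / D) := (hyd u).deriv
  have ddxu : deriv (deriv x) u = 2 * Real.sqrt A * b * E * (1 - A * E ^ 2) / D ^ 2 :=
    (hxd2 u).deriv
  have ddzu : deriv (deriv z) u = 4 * A * b ^ 2 * E ^ 2 / D ^ 2 := (hzd2 u).deriv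
  have ddyu : deriv (deriv y) u = -(c / b) * (4 * A * b ^ 2 * E ^ 2 / D ^ 2) := (hyd2 u).deriv
  have dαu : deriv α u = (WithLp.equiv 2 (Fin 3 → ℝ)).symm
      ![2 * Real.sqrt A * E / D, -(c / b) * (b * (A * E ^ 2 - 1) / D),
        b * (A * E ^ 2 - 1) / D] := (hαd u).deriv
  have ddαu : deriv (deriv α) u = (WithLp.equiv 2 (Fin 3 → ℝ)).symm
      ![2 * Real.sqrt A * b * E * (1 - A * E ^ 2) / D ^ 2,
        -(c / b) * (4 * A * b ^ 2 * E ^ 2 / D ^ 2),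
        4 * A * b ^ 2 * E ^ 2 / D ^ 2] := (hαd2 u).deriv
  -- the three scalar ODEs
  have eqb : 2 * Real.sqrt A * b * E * (1 - A * E ^ 2) / D ^ 2
      + (2 * Real.sqrt A * E / D) * (b * (A * E ^ 2 - 1) / D) = 0 := by
    rw [hD]
    have := (hDpos u).ne'
    field_simp
    ring
  have eqd : 4 * A * b ^ 2 * E ^ 2 / D ^ 2 + (b * (A * E ^ 2 - 1) / D) ^ 2 = b ^ 2 := by
    rw [hD]
    have := (hDpos u).ne'
    field_simp
    ring
  have eqc : -(c / b) * (4 * A * b ^ 2 * E ^ 2 / D ^ 2)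
      + (-(c / b) * (b * (A * E ^ 2 - 1) / D)) * (b * (A * E ^ 2 - 1) / D) = -(c * b) := by
    have h : -(c / b) * (4 * A * b ^ 2 * E ^ 2 / D ^ 2 + (b * (A * E ^ 2 - 1) / D) ^ 2)
        = -(c * b) := by rw [eqd]; field_simp
    linear_combination h
  refine ⟨?_, ?_, ?_, ?_, ?_, ?_⟩
  · -- norm
    rw [dαu, EuclideanSpace.norm_eq]
    rw [show ∑ i, ‖((WithLp.equiv 2 (Fin 3 → ℝ)).symm
        ![2 * Real.sqrt A * E / D, -(c / b) * (b * (A * E ^ 2 - 1) / D),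
          b * (A * E ^ 2 - 1) / D] : R3) i‖ ^ 2 = 1 from ?_, Real.sqrt_one]
    simp only [WithLp.equiv_symm_apply, PiLp.toLp_apply, Fin.sum_univ_three, Matrix.cons_val_zero,
      Matrix.cons_val_one, Matrix.head_cons, Matrix.cons_val_two, Matrix.tail_cons,
      Real.norm_eq_abs, sq_abs]
    exact aux_norm b c A (Real.sqrt A) E D hb hbc hsA hD hDne
  · -- orthogonality
    rw [dαu, hβ]
    simp only [PiLp.inner_apply, RCLike.inner_apply, Fin.sum_univ_three,
      WithLp.equiv_symm_apply, PiLp.toLp_apply, Matrix.cons_val_zero, Matrix.cons_val_one, Matrix.head_cons,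
      Matrix.cons_val_two, Matrix.tail_cons, map_mul, conj_trivial]
    field_simp
    ring
  · rw [ddxu, dxu, dzu]; exact eqb
  · rw [ddyu, dyu, dzu]; exact eqc
  · rw [ddzu, dzu]; exact eqd
  · -- minimal surface equation
    rw [dαu, ddαu, hβ]
    simp only [cross, e3, PiLp.inner_apply, RCLike.inner_apply, Fin.sum_univ_three,
      WithLp.equiv_symm_apply, PiLp.toLp_apply, Matrix.cons_val_zero, Matrix.cons_val_one, Matrix.head_cons,
      Matrix.cons_val_two, Matrix.tail_cons, conj_trivial]
    linear_combination (-(c / b) * (b * (A * E ^ 2 - 1) / D) * c - (b * (A * E ^ 2 - 1) / D) * b) * eqb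
      - ((2 * Real.sqrt A * E / D) * c) * eqc
      + ((2 * Real.sqrt A * E / D) * b) * eqd
      + ((2 * Real.sqrt A * E / D) * b) * hbc
end
end

section
/- Let b > 0 and let z : ℝ → ℝ be twice differentiable with z''(u) + z'(u)² = b² for all u ∈ ℝ. If |z'(u₀)| < b for some u₀ ∈ ℝ, then there exist A > 0 and C ∈ ℝ such that z(u) = log(e^{−bu} + A·e^{bu}) + C for all u ∈ ℝ. -/
noncomputable section
open scoped RealInnerProductSpace

/-- Solutions of y' = c·y are exponentials. -/
lemma exp_growth_aux (c : ℝ) (y : ℝ → ℝ)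
    (hy : ∀ u, HasDerivAt y (c * y u) u) :
    ∀ u, y u = y 0 * Real.exp (c * u) := by
  have key : ∀ u, y u * Real.exp (-(c*u)) = y 0 * Real.exp (-(c*0)) := by
    intro u
    have hv : ∀ x : ℝ, HasDerivAt (fun u => Real.exp (-(c*u))) (Real.exp (-(c*x)) * -c) x := by
      intro x
      simpa using (((hasDerivAt_id x).const_mul c).neg.exp)
    exact is_const_of_deriv_eq_zero
      (fun x => ((hy x).mul (hv x)).differentiableAt)
      (fun x => by
        have H := (hy x).mul (hv x)
        have e : c * y x * Real.exp (-(c*x)) + y x * (Real.exp (-(c*x)) * -c) = 0 := by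
          ring
        exact (e ▸ H : HasDerivAt (fun u => y u * Real.exp (-(c*u))) 0 x).deriv) u 0
  intro u
  have h := key u
  simp only [mul_zero, neg_zero, Real.exp_zero, mul_one] at h
  have : y u * Real.exp (-(c*u)) * Real.exp (c*u) = y 0 * Real.exp (c*u) := by rw [h]
  rwa [mul_assoc, ← Real.exp_add, neg_add_cancel, Real.exp_zero, mul_one] at this

/-- The Riccati-type ODE z'' + z'² = b²: globally defined solutions with
|z'(u₀)| < b at some point are exactly z(u) = log(e^{-bu} + A e^{bu}) + C. -/
theorem riccati_ode_solution
    (b : ℝ) (hb : 0 < b) (z : ℝ → ℝ) (hz : ContDiff ℝ 2 z)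
    (hode : ∀ u, deriv (deriv z) u + deriv z u ^ 2 = b ^ 2)
    (u₀ : ℝ) (hslope : |deriv z u₀| < b) :
    ∃ A > 0, ∃ C : ℝ, ∀ u,
      z u = Real.log (Real.exp (-(b * u)) + A * Real.exp (b * u)) + C := by
  have hzd : Differentiable ℝ z := hz.differentiable (by norm_num)
  have hz1 : ∀ u, HasDerivAt z (deriv z u) u := fun u => (hzd u).hasDerivAt
  have hzd2 : Differentiable ℝ (deriv z) := by
    have h2 : ContDiff ℝ ((1:ℕ∞)+1) z := by
      convert hz using 2
      norm_num
    exact (contDiff_succ_iff_deriv.mp h2).2.2.differentiable (by norm_num)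
  have hz2 : ∀ u, HasDerivAt (deriv z) (deriv (deriv z) u) u := fun u => (hzd2 u).hasDerivAt
  set g := fun u => (deriv z u + b) * Real.exp (z u) with hg
  set h := fun u => (deriv z u - b) * Real.exp (z u) with hh
  have hgd : ∀ u, HasDerivAt g (b * g u) u := by
    intro u
    have H := ((hz2 u).add_const b).mul ((hz1 u).exp)
    have e : deriv (deriv z) u * Real.exp (z u)
        + (deriv z u + b) * (Real.exp (z u) * deriv z u) = b * g u := by
      have := hode u
      simp only [hg]
      nlinarith [Real.exp_pos (z u)]
    exact e ▸ H
  have hhd : ∀ u, HasDerivAt h (-b * h u) u := by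
    intro u
    have H := ((hz2 u).sub_const b).mul ((hz1 u).exp)
    have e : deriv (deriv z) u * Real.exp (z u)
        + (deriv z u - b) * (Real.exp (z u) * deriv z u) = -b * h u := by
      have := hode u
      simp only [hh]
      nlinarith [Real.exp_pos (z u)]
    exact e ▸ H
  have hge : ∀ u, g u = g 0 * Real.exp (b * u) := exp_growth_aux b g hgd
  have hhe : ∀ u, h u = h 0 * Real.exp (-b * u) := exp_growth_aux (-b) h hhd
  have habs := abs_lt.mp hslope
  have hgpos : 0 < g 0 := by
    have h1 : 0 < g u₀ :=
      mul_pos (by linarith [habs.1]) (Real.exp_pos _)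
    have := hge u₀
    nlinarith [Real.exp_pos (b * u₀)]
  have hhneg : h 0 < 0 := by
    have h1 : h u₀ < 0 :=
      mul_neg_of_neg_of_pos (by linarith [habs.2]) (Real.exp_pos _)
    have := hhe u₀
    nlinarith [Real.exp_pos (-b * u₀)]
  set α := -h 0 / (2*b) with hα
  set β := g 0 / (2*b) with hβ
  have hαpos : 0 < α := div_pos (by linarith) (by positivity)
  have hβpos : 0 < β := by rw [hβ]; positivity
  have hexpz : ∀ u, Real.exp (z u) = α * Real.exp (-(b*u)) + β * Real.exp (b*u) := by
    intro u
    have h1 : g u - h u = 2 * b * Real.exp (z u) := by simp only [hg, hh]; ring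
    rw [hge u, hhe u] at h1
    have h2 : Real.exp (-b*u) = Real.exp (-(b*u)) := by ring_nf
    rw [h2] at h1
    have key : Real.exp (z u)
        = (g 0 * Real.exp (b*u) - h 0 * Real.exp (-(b*u))) / (2*b) := by
      field_simp
      linarith [h1]
    rw [key, hα, hβ]
    ring
  refine ⟨β / α, by positivity, Real.log α, fun u => ?_⟩
  have hpos : 0 < Real.exp (-(b*u)) + β/α * Real.exp (b*u) := by positivity
  have : z u = Real.log (α * Real.exp (-(b*u)) + β * Real.exp (b*u)) := by
    rw [← hexpz u, Real.log_exp]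
  rw [this]
  have e2 : α * Real.exp (-(b*u)) + β * Real.exp (b*u)
      = (Real.exp (-(b*u)) + β/α * Real.exp (b*u)) * α := by
    field_simp
  rw [e2, Real.log_mul hpos.ne' hαpos.ne']
end
end

section
/- Let b, c ∈ ℝ with b ≠ 0 and b² + c² = 1, set β = (0, b, c), and let α = (x, y, z) : ℝ → ℝ³ be twice differentiable with ‖α'(u)‖ = 1, ⟨α'(u), β⟩ = 0, and ⟨α'(u) × β, α''(u)⟩ = ⟨α'(u) × β, e₃⟩ for all u ∈ ℝ. Then either α'' ≡ 0 (so α is a straight line and the ruled surface X(u,v) = α(u) + v·β is a plane parallel to the z-axis), or there exist A > 0, ε ∈ {−1, 1}, and constants x₀, y₀, z₀ ∈ ℝ such that for all u ∈ ℝ: z(u) = log(e^{−bu} + A·e^{bu}) + z₀, x(u) = ε·(2/b)·arctan(√A·e^{bu}) + x₀, and y(u) = −(c/b)·(z(u) − z₀) + y₀. -/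
noncomputable section
open scoped RealInnerProductSpace

/- ### Auxiliary lemmas -/

lemma aux_const_of_hasDerivAt_zero (f : ℝ → ℝ) (h : ∀ u, HasDerivAt f 0 u) (u : ℝ) : f u = f 0 :=
  is_const_of_deriv_eq_zero (fun v => (h v).differentiableAt) (fun v => (h v).deriv) u 0

lemma aux_sign_const (f : ℝ → ℝ) (hf : Continuous f) (h0 : ∀ u, f u ≠ 0) (u : ℝ) :
    0 < f u * f 0 := by
  rcases lt_or_gt_of_ne (mul_ne_zero (h0 u) (h0 0)) with h | h
  · exfalso
    have : (0:ℝ) ∈ Set.uIcc (f u) (f 0) := by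
      rcases mul_neg_iff.mp h with ⟨h1, h2⟩ | ⟨h1, h2⟩
      · exact Set.mem_uIcc.2 (Or.inr ⟨h2.le, h1.le⟩)
      · exact Set.mem_uIcc.2 (Or.inl ⟨h1.le, h2.le⟩)
    obtain ⟨v, _, hv⟩ := intermediate_value_uIcc (hf.continuousOn (s := Set.uIcc u 0)) this
    exact h0 v hv
  · exact h

lemma aux_hasDerivAt_g (b A : ℝ) (hA : 0 < A) (u : ℝ) :
    HasDerivAt (fun u => Real.log (Real.exp (-(b*u)) + A * Real.exp (b*u)))
      (b * (A * Real.exp (b*u) - Real.exp (-(b*u))) / (A * Real.exp (b*u) + Real.exp (-(b*u)))) u := by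
  have hD : 0 < Real.exp (-(b*u)) + A * Real.exp (b*u) :=
    add_pos (Real.exp_pos _) (mul_pos hA (Real.exp_pos _))
  have h1 : HasDerivAt (fun u : ℝ => Real.exp (-(b*u))) (-b * Real.exp (-(b*u))) u := by
    have := (Real.hasDerivAt_exp (-(b*u))).comp u (((hasDerivAt_id u).const_mul b).neg)
    simpa [mul_comm, Function.comp_def] using this
  have h2 : HasDerivAt (fun u : ℝ => A * Real.exp (b*u)) (A * (b * Real.exp (b*u))) u := by
    have := ((Real.hasDerivAt_exp (b*u)).comp u ((hasDerivAt_id u).const_mul b)).const_mul A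
    simpa [mul_comm, mul_assoc] using this
  have := (h1.add h2).log hD.ne'
  simp only [Pi.add_apply] at this
  convert this using 1
  field_simp
  ring

lemma aux_hasDerivAt_G (b A : ℝ) (hA : 0 < A) (u : ℝ) :
    HasDerivAt (fun u => b * (A * Real.exp (b*u) - Real.exp (-(b*u))) / (A * Real.exp (b*u) + Real.exp (-(b*u))))
      (b^2 - (b * (A * Real.exp (b*u) - Real.exp (-(b*u))) / (A * Real.exp (b*u) + Real.exp (-(b*u))))^2) u := by
  have hE : HasDerivAt (fun u : ℝ => Real.exp (b*u)) (b * Real.exp (b*u)) u := by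
    have := (Real.hasDerivAt_exp (b*u)).comp u ((hasDerivAt_id u).const_mul b)
    simpa [mul_comm, Function.comp_def] using this
  have hF : HasDerivAt (fun u : ℝ => Real.exp (-(b*u))) (-b * Real.exp (-(b*u))) u := by
    have := (Real.hasDerivAt_exp (-(b*u))).comp u (((hasDerivAt_id u).const_mul b).neg)
    simpa [mul_comm, Function.comp_def] using this
  have hD : 0 < A * Real.exp (b*u) + Real.exp (-(b*u)) :=
    add_pos (mul_pos hA (Real.exp_pos _)) (Real.exp_pos _)
  have hN : HasDerivAt (fun u => b * (A * Real.exp (b*u) - Real.exp (-(b*u))))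
      (b * (A * (b * Real.exp (b*u)) - -b * Real.exp (-(b*u)))) u :=
    ((hE.const_mul A).sub hF).const_mul b
  have hDd : HasDerivAt (fun u => A * Real.exp (b*u) + Real.exp (-(b*u)))
      (A * (b * Real.exp (b*u)) + -b * Real.exp (-(b*u))) u := (hE.const_mul A).add hF
  have := hN.div hDd hD.ne'
  convert this using 1
  · rfl
  · rfl
  · rfl
  have hEF : Real.exp (b*u) * Real.exp (-(b*u)) = 1 := by
    rw [← Real.exp_add]; simp
  field_simp
  nlinarith [hEF, sq_nonneg (Real.exp (b*u))]

lemma aux_hasDerivAt_phi (b A ε : ℝ) (hA : 0 < A) (u : ℝ) :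
    HasDerivAt (fun u => ε * (2/b) * Real.arctan (Real.sqrt A * Real.exp (b*u)))
      (ε * (2/b) * (Real.sqrt A * (b * Real.exp (b*u)) / (1 + A * Real.exp (b*u)^2))) u := by
  have hE : HasDerivAt (fun u : ℝ => Real.sqrt A * Real.exp (b*u)) (Real.sqrt A * (b * Real.exp (b*u))) u := by
    have h0 : HasDerivAt (fun u : ℝ => Real.exp (b*u)) (b * Real.exp (b*u)) u := by
      have := (Real.hasDerivAt_exp (b*u)).comp u ((hasDerivAt_id u).const_mul b)
      simpa [mul_comm, Function.comp_def] using this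
    exact h0.const_mul _
  have := ((Real.hasDerivAt_arctan (Real.sqrt A * Real.exp (b*u))).comp u hE).const_mul (ε * (2/b))
  convert this using 1
  · rfl
  · rfl
  · rfl
  rw [mul_pow, Real.sq_sqrt hA.le]
  ring

lemma aux_mainODE (b : ℝ) (hb : b ≠ 0) (x z X Z : ℝ → ℝ)
    (hxd : ∀ u, HasDerivAt x (X u) u) (hzd : ∀ u, HasDerivAt z (Z u) u)
    (hZd : ∀ u, HasDerivAt Z (b^2 - (Z u)^2) u)
    (hXcont : Continuous X)
    (hnorm : ∀ u, (X u)^2 + (Z u)^2 / b^2 = 1)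
    (hXne : ∀ u, X u ≠ 0) :
    ∃ A > 0, ∃ ε : ℝ, (ε = 1 ∨ ε = -1) ∧ ∃ x₀ z₀ : ℝ, ∀ u,
      z u = Real.log (Real.exp (-(b*u)) + A * Real.exp (b*u)) + z₀ ∧
      x u = ε * (2/b) * Real.arctan (Real.sqrt A * Real.exp (b*u)) + x₀ := by
  have hb2 : (0:ℝ) < b^2 := by positivity
  set t : ℝ := Z 0 / b with ht
  have htlt : t^2 < 1 := by
    have h0 := hnorm 0
    have hX0 : 0 < (X 0)^2 :=
      lt_of_le_of_ne (sq_nonneg _) (Ne.symm (pow_ne_zero 2 (hXne 0)))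
    have : (Z 0)^2 / b^2 < 1 := by nlinarith
    calc t^2 = (Z 0)^2 / b^2 := by rw [ht]; field_simp
    _ < 1 := this
  have ht1 : t < 1 := by nlinarith
  have ht2 : -1 < t := by nlinarith
  set A : ℝ := (1 + t) / (1 - t) with hAdef
  have hA : 0 < A := div_pos (by linarith) (by linarith)
  set g : ℝ → ℝ := fun u => Real.log (Real.exp (-(b*u)) + A * Real.exp (b*u)) with hgdef
  set G : ℝ → ℝ := fun u => b * (A * Real.exp (b*u) - Real.exp (-(b*u))) / (A * Real.exp (b*u) + Real.exp (-(b*u))) with hGdef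
  have hg : ∀ u, HasDerivAt g (G u) u := fun u => aux_hasDerivAt_g b A hA u
  have hG : ∀ u, HasDerivAt G (b^2 - (G u)^2) u := fun u => aux_hasDerivAt_G b A hA u
  have hG0 : G 0 = Z 0 := by
    have h1t : (1:ℝ) - t ≠ 0 := by linarith
    have : Z 0 = b * t := by rw [ht]; field_simp
    rw [this, hGdef, hAdef]
    simp only [mul_zero, Real.exp_zero, neg_zero]
    field_simp
    ring
  -- uniqueness: Z = G
  have hZG : ∀ u, Z u = G u := by
    intro u
    set h : ℝ → ℝ := fun u => (Z u - G u) * Real.exp (z u + g u) with hhdef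
    have hh : ∀ v, HasDerivAt h 0 v := by
      intro v
      have h1 := ((hZd v).sub (hG v)).mul (((hzd v).add (hg v)).exp)
      convert h1 using 1
      · rfl
      · rfl
      · rfl
      simp only [Pi.sub_apply]
      ring
    have := aux_const_of_hasDerivAt_zero h hh u
    rw [hhdef] at this
    simp only [hG0, sub_self, zero_mul] at this
    have hexp : Real.exp (z u + g u) ≠ 0 := Real.exp_ne_zero _
    have := mul_eq_zero.mp this
    rcases this with h | h
    · linarith [sub_eq_zero.mp h]
    · exact absurd h hexp
  -- z formula
  have hzeq : ∀ u, z u = g u + (z 0 - g 0) := by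
    intro u
    have : ∀ v, HasDerivAt (fun u => z u - g u) 0 v := by
      intro v
      have := (hzd v).sub (hg v)
      rw [hZG v, sub_self] at this
      exact this
    have := aux_const_of_hasDerivAt_zero _ this u
    linarith
  -- the sign
  set ε : ℝ := if 0 < X 0 then 1 else -1 with hεdef
  have hεor : ε = 1 ∨ ε = -1 := by
    rw [hεdef]; split <;> simp
  set q : ℝ → ℝ := fun u => 2 * Real.sqrt A * Real.exp (b*u) / (1 + A * Real.exp (b*u)^2) with hqdef
  have hq : ∀ u, 0 < q u := by
    intro u
    have h1 : 0 < Real.sqrt A := Real.sqrt_pos.mpr hA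
    have h2 : 0 < 1 + A * Real.exp (b*u)^2 := by
      have := mul_pos hA (pow_pos (Real.exp_pos (b*u)) 2); linarith
    exact div_pos (mul_pos (mul_pos two_pos h1) (Real.exp_pos _)) h2
  set Φ : ℝ → ℝ := fun u => ε * (2/b) * (Real.sqrt A * (b * Real.exp (b*u)) / (1 + A * Real.exp (b*u)^2)) with hΦdef
  have hΦq : ∀ u, Φ u = ε * q u := by
    intro u
    have h2 : (1 + A * Real.exp (b*u)^2) ≠ 0 := by
      have := mul_pos hA (pow_pos (Real.exp_pos (b*u)) 2); positivity
    rw [hΦdef, hqdef]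
    field_simp
  -- squares agree
  have hsq : ∀ u, (X u)^2 = (Φ u)^2 := by
    intro u
    have h1 : (X u)^2 = 1 - (G u)^2 / b^2 := by
      have := hnorm u; rw [hZG u] at this; linarith
    have hε2 : ε^2 = 1 := by rcases hεor with h | h <;> rw [h] <;> norm_num
    rw [h1, hΦdef, hGdef]
    beta_reduce
    have hE : Real.exp (b*u) ≠ 0 := Real.exp_ne_zero _
    have hEF : Real.exp (-(b*u)) = (Real.exp (b*u))⁻¹ := by
      rw [← Real.exp_neg]
    have hD : (A * Real.exp (b*u) + (Real.exp (b*u))⁻¹) ≠ 0 :=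
      (add_pos (mul_pos hA (Real.exp_pos _)) (inv_pos.mpr (Real.exp_pos _))).ne'
    have hD2 : (1 + A * Real.exp (b*u)^2) ≠ 0 := by
      have := mul_pos hA (pow_pos (Real.exp_pos (b*u)) 2); positivity
    have hsqA : Real.sqrt A ^ 2 = A := Real.sq_sqrt hA.le
    have hR : (ε * (2 / b) * (Real.sqrt A * (b * Real.exp (b*u)) / (1 + A * Real.exp (b*u) ^ 2))) ^ 2
        = 4 * A * Real.exp (b*u)^2 / (1 + A * Real.exp (b*u)^2)^2 := by
      simp only [mul_pow, div_pow, hε2, hsqA]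
      field_simp
      ring
    rw [hR, hEF]
    field_simp
    ring
  -- X = Φ
  have hXsign := aux_sign_const X hXcont hXne
  have hXΦ : ∀ u, X u = Φ u := by
    intro u
    have h2 : X u = Φ u ∨ X u = -Φ u := by
      have h := hsq u
      rw [sq, sq] at h
      exact mul_self_eq_mul_self_iff.mp h
    rcases h2 with h | h
    · exact h
    · exfalso
      have hu := hXsign u
      have hqu := hq u
      have hq0 := hq 0
      rw [hΦq u] at h
      by_cases hX0 : 0 < X 0
      · have hε1 : ε = 1 := by rw [hεdef, if_pos hX0]
        rw [hε1] at h
        nlinarith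
      · have hX0' : X 0 < 0 := lt_of_le_of_ne (not_lt.mp hX0) (hXne 0)
        have hε1 : ε = -1 := by rw [hεdef, if_neg hX0]
        rw [hε1] at h
        nlinarith
  -- x formula
  have hxeq : ∀ u, x u = ε * (2/b) * Real.arctan (Real.sqrt A * Real.exp (b*u)) + (x 0 - ε * (2/b) * Real.arctan (Real.sqrt A * Real.exp (b*0))) := by
    intro u
    have hdiff : ∀ v, HasDerivAt (fun u => x u - ε * (2/b) * Real.arctan (Real.sqrt A * Real.exp (b*u))) 0 v := by
      intro v
      have h1 := (hxd v).sub (aux_hasDerivAt_phi b A ε hA v)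
      rw [hXΦ v, hΦdef, sub_self] at h1
      exact h1
    have := aux_const_of_hasDerivAt_zero _ hdiff u
    linarith
  exact ⟨A, hA, ε, hεor, x 0 - ε * (2/b) * Real.arctan (Real.sqrt A * Real.exp (b*0)), z 0 - g 0, fun u => ⟨hzeq u, hxeq u⟩⟩

lemma aux_hasDerivAt_R3 (f : ℝ → R3) (u : ℝ) (v : Fin 3 → ℝ)
    (h : ∀ i, HasDerivAt (fun u => f u i) (v i) u) :
    HasDerivAt f ((WithLp.equiv 2 (Fin 3 → ℝ)).symm v) u := by
  have h1 : HasDerivAt ((PiLp.continuousLinearEquiv 2 ℝ (fun _ : Fin 3 => ℝ)) ∘ f) v u :=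
    hasDerivAt_pi.2 h
  have := ((PiLp.continuousLinearEquiv 2 ℝ (fun _ : Fin 3 => ℝ)).symm).hasFDerivAt.comp_hasDerivAt u h1
  simpa [Function.comp_def] using this

lemma aux_comp_contDiff (f : ℝ → R3) (h : ContDiff ℝ 2 f) (i : Fin 3) :
    ContDiff ℝ 2 (fun u => f u i) :=
  (contDiff_pi.mp ((PiLp.continuousLinearEquiv 2 ℝ (fun _ : Fin 3 => ℝ)).contDiff.comp h)) i

lemma aux_diff_deriv_of_contDiff2 (f : ℝ → ℝ) (h : ContDiff ℝ 2 f) : Differentiable ℝ (deriv f) := by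
  have h' : ContDiff ℝ ((1:ℕ) + 1) f := by exact_mod_cast h
  exact (contDiff_succ_iff_deriv.mp h').2.2.differentiable (by norm_num)

/-- Theorem 1 (uniqueness part): with β = (0, b, c), the cylindrical ruled minimal
surfaces in ℝ³ with density e^z are planes parallel to the z-axis or the
surfaces (17). -/
theorem cylindrical_ruled_minimal_classification
    (b c : ℝ) (hb : b ≠ 0) (hbc : b ^ 2 + c ^ 2 = 1)
    (x y z : ℝ → ℝ) (α : ℝ → R3)
    (hαdef : ∀ u, α u = (WithLp.equiv 2 (Fin 3 → ℝ)).symm ![x u, y u, z u])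
    (β : R3) (hβ : β = (WithLp.equiv 2 (Fin 3 → ℝ)).symm ![0, b, c])
    (hα : ContDiff ℝ 2 α)
    (hspeed : ∀ u, ‖deriv α u‖ = 1)
    (horth : ∀ u, ⟪deriv α u, β⟫ = 0)
    (hmin : ∀ u, ⟪cross (deriv α u) β, deriv (deriv α) u⟫ = ⟪cross (deriv α u) β, e3⟫) :
    (∀ u, deriv (deriv α) u = 0) ∨
      ∃ A > 0, ∃ ε : ℝ, (ε = 1 ∨ ε = -1) ∧ ∃ x₀ y₀ z₀ : ℝ, ∀ u : ℝ,
        z u = Real.log (Real.exp (-(b * u)) + A * Real.exp (b * u)) + z₀ ∧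
        x u = ε * (2 / b) * Real.arctan (Real.sqrt A * Real.exp (b * u)) + x₀ ∧
        y u = -(c / b) * (z u - z₀) + y₀ := by
  classical
  have hb2 : (b:ℝ)^2 ≠ 0 := pow_ne_zero 2 hb
  -- coordinates are C²
  have hax : (fun u => α u 0) = x := by funext u; rw [hαdef u]; rfl
  have hay : (fun u => α u 1) = y := by funext u; rw [hαdef u]; rfl
  have haz : (fun u => α u 2) = z := by funext u; rw [hαdef u]; rfl
  have hx2 : ContDiff ℝ 2 x := hax ▸ aux_comp_contDiff α hα 0
  have hy2 : ContDiff ℝ 2 y := hay ▸ aux_comp_contDiff α hα 1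
  have hz2 : ContDiff ℝ 2 z := haz ▸ aux_comp_contDiff α hα 2
  set X := deriv x with hXdef
  set Y := deriv y with hYdef
  set Z := deriv z with hZdef
  set X' := deriv X with hX'def
  set Y' := deriv Y with hY'def
  set Z' := deriv Z with hZ'def
  have hxd : ∀ u, HasDerivAt x (X u) u := fun u => (hx2.differentiable (by norm_num) u).hasDerivAt
  have hyd : ∀ u, HasDerivAt y (Y u) u := fun u => (hy2.differentiable (by norm_num) u).hasDerivAt
  have hzd : ∀ u, HasDerivAt z (Z u) u := fun u => (hz2.differentiable (by norm_num) u).hasDerivAt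
  have hXd : ∀ u, HasDerivAt X (X' u) u := fun u => (aux_diff_deriv_of_contDiff2 x hx2 u).hasDerivAt
  have hYd : ∀ u, HasDerivAt Y (Y' u) u := fun u => (aux_diff_deriv_of_contDiff2 y hy2 u).hasDerivAt
  have hZd : ∀ u, HasDerivAt Z (Z' u) u := fun u => (aux_diff_deriv_of_contDiff2 z hz2 u).hasDerivAt
  have hXcont : Continuous X := hx2.continuous_deriv (by norm_num)
  -- first derivative of α in coordinates
  have dα : ∀ u, deriv α u = (WithLp.equiv 2 (Fin 3 → ℝ)).symm ![X u, Y u, Z u] := by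
    intro u
    refine (aux_hasDerivAt_R3 α u ![X u, Y u, Z u] ?_).deriv
    intro i
    fin_cases i
    · have := hxd u; rw [← hax] at this; exact this
    · have := hyd u; rw [← hay] at this; exact this
    · have := hzd u; rw [← haz] at this; exact this
  have hdax : (fun u => deriv α u 0) = X := by funext u; rw [dα u]; rfl
  have hday : (fun u => deriv α u 1) = Y := by funext u; rw [dα u]; rfl
  have hdaz : (fun u => deriv α u 2) = Z := by funext u; rw [dα u]; rfl
  have ddα : ∀ u, deriv (deriv α) u = (WithLp.equiv 2 (Fin 3 → ℝ)).symm ![X' u, Y' u, Z' u] := by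
    intro u
    refine (aux_hasDerivAt_R3 (deriv α) u ![X' u, Y' u, Z' u] ?_).deriv
    intro i
    fin_cases i
    · have := hXd u; rw [← hdax] at this; exact this
    · have := hYd u; rw [← hday] at this; exact this
    · have := hZd u; rw [← hdaz] at this; exact this
  -- scalar equations
  have hsp : ∀ u, X u^2 + Y u^2 + Z u^2 = 1 := by
    intro u
    have h2 : ⟪deriv α u, deriv α u⟫ = 1 := by
      rw [real_inner_self_eq_norm_sq, hspeed u]; norm_num
    rw [dα u] at h2
    simp [-inner_self_eq_norm_sq_to_K, PiLp.inner_apply, Fin.sum_univ_three, PiLp.toLp_apply,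
      RCLike.inner_apply] at h2
    nlinarith [h2]
  have hor : ∀ u, b * Y u + c * Z u = 0 := by
    intro u
    have h := horth u
    rw [dα u, hβ] at h
    simp [PiLp.inner_apply, Fin.sum_univ_three, PiLp.toLp_apply,
      RCLike.inner_apply] at h
    linarith
  have hminS : ∀ u, (Y u * c - Z u * b) * X' u - X u * c * Y' u + X u * b * Z' u = X u * b := by
    intro u
    have h := hmin u
    rw [dα u, ddα u, hβ] at h
    simp [cross, e3, PiLp.inner_apply, Fin.sum_univ_three, PiLp.toLp_apply,
      RCLike.inner_apply] at h
    linarith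
  have hor' : ∀ u, b * Y' u + c * Z' u = 0 := by
    intro u
    have h1 : HasDerivAt (fun u => b * Y u + c * Z u) (b * Y' u + c * Z' u) u :=
      ((hYd u).const_mul b).add ((hZd u).const_mul c)
    have h2 : HasDerivAt (fun u => b * Y u + c * Z u) 0 u := by
      rw [show (fun u => b * Y u + c * Z u) = fun _ => (0:ℝ) from funext hor]
      exact hasDerivAt_const u 0
    exact h1.unique h2
  have hminS2 : ∀ u, X u * Z' u - Z u * X' u = b^2 * X u := by
    intro u
    linear_combination b * hminS u - c * X' u * hor u + c * X u * hor' u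
      - (X u * Z' u - Z u * X' u) * hbc
  have hnorm3 : ∀ u, X u^2 * b^2 + Z u^2 = b^2 := by
    intro u
    linear_combination b^2 * hsp u + (c * Z u - b * Y u) * hor u - Z u^2 * hbc
  have hD : ∀ u, 2 * X u * X' u * b^2 + 2 * Z u * Z' u = 0 := by
    intro u
    have h1 := (((hXd u).pow 2).mul_const (b^2)).add ((hZd u).pow 2)
    have h2 : HasDerivAt (fun u => X u^2 * b^2 + Z u^2) 0 u := by
      rw [show (fun u => X u^2 * b^2 + Z u^2) = fun _ => b^2 from funext hnorm3]
      exact hasDerivAt_const u _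
    have h3 := h1.unique h2
    push_cast at h3
    linarith [h3]
  have hODE : ∀ u, Z' u = b^2 - Z u^2 := by
    intro u
    have key : Z' u * b^2 = (b^2 - Z u^2) * b^2 := by
      linear_combination (X u * b^2) * hminS2 u + (Z u / 2) * hD u + (b^2 - Z' u) * hnorm3 u
    exact mul_right_cancel₀ hb2 key
  by_cases hex : ∀ u, X u ≠ 0
  · right
    have hnorm2 : ∀ u, X u^2 + Z u^2 / b^2 = 1 := by
      intro u
      have h := hnorm3 u
      field_simp
      linarith
    have hZode : ∀ u, HasDerivAt Z (b^2 - (Z u)^2) u := fun u => (hODE u) ▸ hZd u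
    obtain ⟨A, hA, ε, hεor, x₀, z₀, hsol⟩ :=
      aux_mainODE b hb x z X Z hxd hzd hZode hXcont hnorm2 hex
    refine ⟨A, hA, ε, hεor, x₀, y 0 + (c/b) * z 0 - (c/b) * z₀, z₀, fun u =>
      ⟨(hsol u).1, (hsol u).2, ?_⟩⟩
    have hconst : ∀ v, HasDerivAt (fun u => y u + (c/b) * z u) 0 v := by
      intro v
      have h1 := (hyd v).add ((hzd v).const_mul (c/b))
      convert h1 using 1
      · rfl
      · rfl
      · rfl
      have h2 := hor v
      field_simp
      linarith
    have hc := aux_const_of_hasDerivAt_zero _ hconst u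
    linear_combination hc
  · left
    push_neg at hex
    obtain ⟨u₀, hu₀⟩ := hex
    have hfd : ∀ u, HasDerivAt (fun u => (b^2 - Z u^2) * Real.exp (2 * z u)) 0 u := by
      intro u
      have h1 : HasDerivAt (fun u => b^2 - Z u^2) (-((2:ℕ) * Z u^1 * Z' u)) u :=
        ((hZd u).pow 2).const_sub (b^2)
      have h2 : HasDerivAt (fun u => Real.exp (2 * z u)) (Real.exp (2 * z u) * (2 * Z u)) u :=
        ((hzd u).const_mul 2).exp
      have h3 := h1.mul h2
      convert h3 using 1
      · rfl
      · rfl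
      · rfl
      rw [hODE u]
      push_cast
      ring
    have hZsq : ∀ u, Z u^2 = b^2 := by
      have hZu₀ : Z u₀^2 = b^2 := by
        linear_combination hnorm3 u₀ - b^2 * (X u₀ + 0) * hu₀
      have e2 := aux_const_of_hasDerivAt_zero _ hfd u₀
      have h0 : (b^2 - Z 0^2) * Real.exp (2 * z 0) = 0 := by
        rw [← e2, hZu₀]
        ring
      intro u
      have e1 := aux_const_of_hasDerivAt_zero _ hfd u
      rw [h0] at e1
      rcases mul_eq_zero.mp e1 with h | h
      · linarith
      · exact absurd h (Real.exp_ne_zero _)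
    have hXzero : ∀ u, X u = 0 := by
      intro u
      have h1 := hnorm3 u
      have h2 := hZsq u
      have h3 : X u^2 * b^2 = 0 := by linarith
      rcases mul_eq_zero.mp h3 with h | h
      · exact pow_eq_zero_iff (by norm_num) |>.mp h
      · exact absurd h hb2
    have hX'zero : ∀ u, X' u = 0 := by
      intro u
      have h1 : HasDerivAt X 0 u := by
        rw [show X = fun _ => (0:ℝ) from funext hXzero]
        exact hasDerivAt_const u 0
      exact (hXd u).unique h1
    have hZ'zero : ∀ u, Z' u = 0 := by
      intro u
      rw [hODE u]
      linarith [hZsq u]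
    have hY'zero : ∀ u, Y' u = 0 := by
      intro u
      have h1 := hor' u
      rw [hZ'zero u] at h1
      have : b * Y' u = 0 := by linarith
      exact (mul_eq_zero.mp this).resolve_left hb
    intro u
    rw [ddα u, hX'zero u, hY'zero u, hZ'zero u]
    ext i
    fin_cases i <;> rfl
end
end

section
/- Let g, h : ℝ → ℝ be twice differentiable functions and suppose that g''(u)·(1 + h'(v)²) + h''(v)·(1 + g'(u)²) = 1 + g'(u)² + h'(v)² for all u, v ∈ ℝ. Then g is affine or h is affine: either there exist a, b ∈ ℝ with g(u) = a·u + b for all u ∈ ℝ, or there exist c, d ∈ ℝ with h(v) = c·v + d for all v ∈ ℝ. -/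
private lemma const_of_sq_const {f : ℝ → ℝ} (hf : Continuous f)
    (hsq : ∀ x, f x ^ 2 = f 0 ^ 2) : ∀ x, f x = f 0 := by
  by_cases h0 : f 0 = 0
  · intro x
    have := hsq x
    rw [h0] at this ⊢
    nlinarith [this]
  · have halt : ∀ x, f x = f 0 ∨ f x = -f 0 := by
      intro x
      have h1 : (f x - f 0) * (f x + f 0) = 0 := by nlinarith [hsq x]
      rcases mul_eq_zero.mp h1 with h | h
      · exact Or.inl (by linarith)
      · exact Or.inr (by linarith)
    have hset : {x : ℝ | f x = f 0} = f ⁻¹' {y : ℝ | y ≠ -f 0} := by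
      ext x
      simp only [Set.mem_setOf_eq, Set.mem_preimage]
      constructor
      · intro hx hc
        rw [hx] at hc
        exact h0 (by linarith)
      · intro hx
        rcases halt x with h | h
        · exact h
        · exact absurd h hx
    have hopen : IsOpen {x : ℝ | f x = f 0} := by
      rw [hset]
      exact (isOpen_compl_singleton.preimage hf)
    have hclosed : IsClosed {x : ℝ | f x = f 0} := isClosed_eq hf continuous_const
    have hclopen : IsClopen {x : ℝ | f x = f 0} := ⟨hclosed, hopen⟩
    rcases isClopen_iff.mp hclopen with he | hu
    · exfalso
      have : (0 : ℝ) ∈ {x : ℝ | f x = f 0} := rfl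
      rw [he] at this
      exact this
    · intro x
      have : x ∈ {x : ℝ | f x = f 0} := by rw [hu]; trivial
      exact this

private lemma affine_of_deriv_const {f : ℝ → ℝ} (hf : Differentiable ℝ f)
    (hc : ∀ x, deriv f x = deriv f 0) : ∃ a b : ℝ, ∀ x, f x = a * x + b := by
  refine ⟨deriv f 0, f 0, fun x => ?_⟩
  set c := deriv f 0 with hcdef
  have hF : ∀ y : ℝ, HasDerivAt (fun x => f x - c * x) (deriv f y - c) y := by
    intro y
    have := ((hf y).hasDerivAt).sub ((hasDerivAt_id' y).const_mul c)
    rw [mul_one] at this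
    exact this
  have hFd : Differentiable ℝ (fun x => f x - c * x) := fun y => (hF y).differentiableAt
  have hFz : ∀ y, deriv (fun x => f x - c * x) y = 0 := by
    intro y
    rw [(hF y).deriv, hc y]
    ring
  have := is_const_of_deriv_eq_zero hFd hFz x 0
  linarith [this]

private lemma main_alg (A P B Q : ℝ → ℝ)
    (hPpos : ∀ u, 0 < P u) (_hQpos : ∀ v, 0 < Q v)
    (key : ∀ u v, Q v * A u + P u * B v = 1) :
    (∀ u, P u = P 0) ∨ (∀ v, Q v = Q 0) := by
  by_cases hA : ∀ u, A u = A 0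
  · by_cases hB : ∀ v, B v = B 0
    · by_cases ha : A 0 = 0
      · left
        intro u
        have h1 : P u * B 0 = 1 := by
          have := key u 0
          rw [hA u, ha] at this
          linarith
        have h2 : P 0 * B 0 = 1 := by
          have := key 0 0
          rw [ha] at this
          linarith
        have hB0 : B 0 ≠ 0 := by
          intro h
          rw [h, mul_zero] at h1
          norm_num at h1
        exact mul_right_cancel₀ hB0 (by linarith)
      · right
        intro v
        have h1 := key 0 v
        have h2 := key 0 0
        rw [hB v] at h1
        have : Q v * A 0 = Q 0 * A 0 := by linarith
        exact mul_right_cancel₀ ha this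
    · left
      push_neg at hB
      obtain ⟨v₁, hv₁⟩ := hB
      intro u
      have e1 := key u v₁
      have e2 := key u 0
      have f1 := key 0 v₁
      have f2 := key 0 0
      rw [hA u] at e1 e2
      have : P u * (B v₁ - B 0) = P 0 * (B v₁ - B 0) := by ring_nf; nlinarith [e1, e2, f1, f2]
      exact mul_right_cancel₀ (sub_ne_zero.mpr hv₁) this
  · by_cases hB : ∀ v, B v = B 0
    · right
      push_neg at hA
      obtain ⟨u₁, hu₁⟩ := hA
      intro v
      have e1 := key u₁ v
      have e2 := key 0 v
      have f1 := key u₁ 0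
      have f2 := key 0 0
      rw [hB v] at e1 e2
      have : Q v * (A u₁ - A 0) = Q 0 * (A u₁ - A 0) := by nlinarith [e1, e2, f1, f2]
      exact mul_right_cancel₀ (sub_ne_zero.mpr hu₁) this
    · left
      push_neg at hA hB
      obtain ⟨u₁, hu₁⟩ := hA
      obtain ⟨v₁, hv₁⟩ := hB
      have hd : B v₁ - B 0 ≠ 0 := sub_ne_zero.mpr hv₁
      have hd' : A u₁ - A 0 ≠ 0 := sub_ne_zero.mpr hu₁
      -- relation 1 : ∀ u, A u * (Q 0 - Q v₁) = P u * (B v₁ - B 0)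
      have r1 : ∀ u, A u * (Q 0 - Q v₁) = P u * (B v₁ - B 0) := by
        intro u
        have e1 := key u v₁
        have e2 := key u 0
        nlinarith [e1, e2]
      -- relation 2 : ∀ v, Q v * (A u₁ - A 0) = B v * (P 0 - P u₁)
      have r2 : ∀ v, Q v * (A u₁ - A 0) = B v * (P 0 - P u₁) := by
        intro v
        have e1 := key u₁ v
        have e2 := key 0 v
        nlinarith [e1, e2]
      have he : Q 0 - Q v₁ ≠ 0 := by
        intro he
        have := r1 0
        rw [he, mul_zero] at this
        exact (mul_ne_zero (hPpos 0).ne' hd) this.symm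
      have main : ∀ u v, P u * B v * ((P 0 - P u₁) * (B v₁ - B 0) + (A u₁ - A 0) * (Q 0 - Q v₁))
          = (A u₁ - A 0) * (Q 0 - Q v₁) := by
        intro u v
        have k := key u v
        have h1 := r1 u
        have h2 := r2 v
        linear_combination ((A u₁ - A 0) * (Q 0 - Q v₁)) * k - ((A u₁ - A 0) * Q v) * h1
          - (P u * (B v₁ - B 0)) * h2
      have hde : (A u₁ - A 0) * (Q 0 - Q v₁) ≠ 0 := mul_ne_zero hd' he
      intro u
      have m1 := main u 0
      have m2 := main 0 0
      have hB0s : B 0 * ((P 0 - P u₁) * (B v₁ - B 0) + (A u₁ - A 0) * (Q 0 - Q v₁)) ≠ 0 := by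
        intro h
        rw [mul_assoc, h, mul_zero] at m2
        exact hde m2.symm
      have : P u * (B 0 * ((P 0 - P u₁) * (B v₁ - B 0) + (A u₁ - A 0) * (Q 0 - Q v₁)))
          = P 0 * (B 0 * ((P 0 - P u₁) * (B v₁ - B 0) + (A u₁ - A 0) * (Q 0 - Q v₁))) := by
        rw [← mul_assoc, ← mul_assoc, m1, m2]
      exact mul_right_cancel₀ hB0s this

/-- Theorem 2: a translation minimal surface (u, v, g(u) + h(v)) in ℝ³ with
density e^z has g or h affine. -/
theorem translation_minimal_is_ruled
    (g h : ℝ → ℝ) (hg : ContDiff ℝ 2 g) (hh : ContDiff ℝ 2 h)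
    (heq : ∀ u v : ℝ,
      deriv (deriv g) u * (1 + deriv h v ^ 2) + deriv (deriv h) v * (1 + deriv g u ^ 2) =
        1 + deriv g u ^ 2 + deriv h v ^ 2) :
    (∃ a b : ℝ, ∀ u, g u = a * u + b) ∨ (∃ c d : ℝ, ∀ v, h v = c * v + d) := by
  have hgd : Differentiable ℝ g := hg.differentiable (by norm_num)
  have hhd : Differentiable ℝ h := hh.differentiable (by norm_num)
  have hgc : Continuous (deriv g) := hg.continuous_deriv (by norm_num)
  have hhc : Continuous (deriv h) := hh.continuous_deriv (by norm_num)
  have key : ∀ u v : ℝ, (1 + deriv h v ^ 2) * (1 - deriv (deriv g) u) +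
      (1 + deriv g u ^ 2) * (1 - deriv (deriv h) v) = 1 := by
    intro u v
    linear_combination -(heq u v)
  have halg := main_alg (fun u => 1 - deriv (deriv g) u) (fun u => 1 + deriv g u ^ 2)
    (fun v => 1 - deriv (deriv h) v) (fun v => 1 + deriv h v ^ 2)
    (fun u => by positivity) (fun v => by positivity) key
  rcases halg with hP | hQ
  · left
    have hsq : ∀ u, deriv g u ^ 2 = deriv g 0 ^ 2 := by
      intro u
      have := hP u
      linarith
    exact affine_of_deriv_const hgd (const_of_sq_const hgc hsq)
  · right
    have hsq : ∀ v, deriv h v ^ 2 = deriv h 0 ^ 2 := by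
      intro v
      have := hQ v
      linarith
    exact affine_of_deriv_const hhd (const_of_sq_const hhc hsq)
end

section
/- Let c, D ∈ ℝ and let I ⊆ ℝ be an open interval on which cos((u + D)/√(1 + c²)) ≠ 0. Define g : I → ℝ by g(u) = −(1 + c²)·log|cos((u + D)/√(1 + c²))|. Then g''(u)·(1 + c²) = 1 + c² + g'(u)² for all u ∈ I; equivalently, with h(v) = c·v + d for any d ∈ ℝ, one has g''(u)·(1 + h'(v)²) + h''(v)·(1 + g'(u)²) = 1 + g'(u)² + h'(v)² for all u ∈ I and all v ∈ ℝ. -/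
/-- The explicit Scherk-type translation minimal surface: the function
g(u) = -(1+c²)·log|cos((u+D)/√(1+c²))| satisfies the minimality ODE. -/
theorem scherk_type_solution
    (c D d a b : ℝ)
    (hcos : ∀ u ∈ Set.Ioo a b, Real.cos ((u + D) / Real.sqrt (1 + c ^ 2)) ≠ 0)
    (g : ℝ → ℝ)
    (hg : ∀ u, g u = -(1 + c ^ 2) * Real.log |Real.cos ((u + D) / Real.sqrt (1 + c ^ 2))|)
    (h : ℝ → ℝ) (hh : ∀ v, h v = c * v + d) :
    (∀ u ∈ Set.Ioo a b,
      deriv (deriv g) u * (1 + c ^ 2) = 1 + c ^ 2 + deriv g u ^ 2) ∧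
    (∀ u ∈ Set.Ioo a b, ∀ v : ℝ,
      deriv (deriv g) u * (1 + deriv h v ^ 2) + deriv (deriv h) v * (1 + deriv g u ^ 2) =
        1 + deriv g u ^ 2 + deriv h v ^ 2) := by
  have hk2 : (0:ℝ) < 1 + c ^ 2 := by positivity
  set k := Real.sqrt (1 + c ^ 2) with hkdef
  have hk : 0 < k := Real.sqrt_pos.mpr hk2
  have hksq : k ^ 2 = 1 + c ^ 2 := Real.sq_sqrt hk2.le
  have hgfun : g = fun u => -(1 + c ^ 2) * Real.log (Real.cos ((u + D) / k)) := by
    funext u; rw [hg u, Real.log_abs]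
  have h1 : ∀ u : ℝ, HasDerivAt (fun u : ℝ => (u + D) / k) (1 / k) u := by
    intro u
    simpa using ((hasDerivAt_id u).add_const D).div_const k
  have hderiv1 : ∀ u ∈ Set.Ioo a b,
      HasDerivAt g (k * Real.tan ((u + D) / k)) u := by
    intro u hu
    have hcosu := hcos u hu
    have h2 : HasDerivAt (fun u : ℝ => Real.cos ((u + D) / k))
        (-Real.sin ((u + D) / k) * (1 / k)) u := (Real.hasDerivAt_cos _).comp u (h1 u)
    have h3 : HasDerivAt (fun u : ℝ => Real.log (Real.cos ((u + D) / k)))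
        (-Real.sin ((u + D) / k) * (1 / k) / Real.cos ((u + D) / k)) u :=
      h2.log hcosu
    have h4 := h3.const_mul (-(1 + c ^ 2))
    rw [hgfun]
    refine h4.congr_deriv ?_
    rw [Real.tan_eq_sin_div_cos, ← hksq]
    field_simp
  have hdg : ∀ u ∈ Set.Ioo a b, deriv g u = k * Real.tan ((u + D) / k) :=
    fun u hu => (hderiv1 u hu).deriv
  have hddg : ∀ u ∈ Set.Ioo a b,
      deriv (deriv g) u = 1 / Real.cos ((u + D) / k) ^ 2 := by
    intro u hu
    have heq : deriv g =ᶠ[nhds u] fun u => k * Real.tan ((u + D) / k) :=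
      Filter.eventuallyEq_of_mem (isOpen_Ioo.mem_nhds hu) (fun x hx => hdg x hx)
    rw [heq.deriv_eq]
    have htan : HasDerivAt (fun u : ℝ => k * Real.tan ((u + D) / k))
        (k * (1 / Real.cos ((u + D) / k) ^ 2 * (1 / k))) u :=
      by have ht := Real.hasDerivAt_tan (hcos u hu); exact (ht.comp u (h1 u)).const_mul k
    rw [htan.deriv]
    rw [mul_one_div, mul_comm, div_mul_cancel₀ _ hk.ne']
  have main : ∀ u ∈ Set.Ioo a b,
      deriv (deriv g) u * (1 + c ^ 2) = 1 + c ^ 2 + deriv g u ^ 2 := by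
    intro u hu
    have hcosu := hcos u hu
    rw [hddg u hu, hdg u hu, Real.tan_eq_sin_div_cos, ← hksq]
    have hpy := Real.sin_sq_add_cos_sq ((u + D) / k)
    field_simp
    nlinarith [hpy]
  refine ⟨main, ?_⟩
  intro u hu v
  have hhfun : h = fun v => c * v + d := funext hh
  have hdh : deriv h = fun _ => c := by
    funext x
    rw [hhfun]
    simpa using (((hasDerivAt_id x).const_mul c).add_const d).deriv
  rw [hdh]
  simp only [deriv_const', zero_mul, add_zero]
  linarith [main u hu]
end

section
/- Let c ∈ ℝ, let I ⊆ ℝ be an open interval, and let g : I → ℝ be twice differentiable with g''(u)·(1 + c²) = 1 + c² + g'(u)² for all u ∈ I. Then there exist D, E ∈ ℝ such that cos((u + D)/√(1 + c²)) ≠ 0 and g(u) = −(1 + c²)·log|cos((u + D)/√(1 + c²))| + E for all u ∈ I. -/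
open Set Real

/-- A function with zero derivative on an open interval is constant there. -/
lemma const_of_deriv_zero_Ioo {f : ℝ → ℝ} {a b : ℝ}
    (hf : ∀ u ∈ Set.Ioo a b, HasDerivAt f 0 u) :
    ∀ x ∈ Set.Ioo a b, ∀ y ∈ Set.Ioo a b, f x = f y := by
  have key : ∀ x ∈ Set.Ioo a b, ∀ y ∈ Set.Ioo a b, x ≤ y → f y = f x := by
    intro x hx y hy hxy
    have hsub : Set.Icc x y ⊆ Set.Ioo a b := Set.Icc_subset_Ioo hx.1 hy.2
    exact constant_of_has_deriv_right_zero
      (fun u hu => (hf u (hsub hu)).continuousAt.continuousWithinAt)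
      (fun u hu => (hf u (hsub (Set.Ico_subset_Icc_self hu))).hasDerivWithinAt)
      y (Set.right_mem_Icc.2 hxy)
  intro x hx y hy
  rcases le_total x y with h | h
  · exact (key x hx y hy h).symm
  · exact key y hy x hx h

/-- Every solution of g''·(1+c²) = 1+c²+g'² on an open interval is of Scherk type:
g(u) = -(1+c²)·log|cos((u+D)/√(1+c²))| + E. -/
theorem scherk_type_uniqueness
    (c a b : ℝ) (g g' g'' : ℝ → ℝ)
    (hg' : ∀ u ∈ Set.Ioo a b, HasDerivAt g (g' u) u)
    (hg'' : ∀ u ∈ Set.Ioo a b, HasDerivAt g' (g'' u) u)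
    (hode : ∀ u ∈ Set.Ioo a b, g'' u * (1 + c ^ 2) = 1 + c ^ 2 + g' u ^ 2) :
    ∃ D E : ℝ, ∀ u ∈ Set.Ioo a b,
      Real.cos ((u + D) / Real.sqrt (1 + c ^ 2)) ≠ 0 ∧
      g u = -(1 + c ^ 2) * Real.log |Real.cos ((u + D) / Real.sqrt (1 + c ^ 2))| + E := by
  rcases le_or_gt b a with hba | hab
  · exact ⟨0, 0, fun u hu => absurd (hu.1.trans hu.2) (not_lt.2 hba)⟩
  set k := Real.sqrt (1 + c ^ 2) with hk
  have hc : (0:ℝ) < 1 + c ^ 2 := by positivity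
  have hk0 : 0 < k := Real.sqrt_pos.2 hc
  have hk2 : k ^ 2 = 1 + c ^ 2 := Real.sq_sqrt hc.le
  set u₀ := (a + b) / 2 with hu₀def
  have hu₀ : u₀ ∈ Set.Ioo a b := ⟨by linarith, by linarith⟩
  -- Step 1: φ u := arctan (g' u / k) - u / k is constant.
  have hφ : ∀ u ∈ Set.Ioo a b,
      HasDerivAt (fun u => Real.arctan (g' u / k) - u / k) 0 u := by
    intro u hu
    have h1 : HasDerivAt (fun u => g' u / k) (g'' u / k) u := (hg'' u hu).div_const k
    have h2 := h1.arctan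
    have h3 : 1 / (1 + (g' u / k) ^ 2) * (g'' u / k) = 1 / k := by
      rw [div_pow, hk2]
      have hne : (1 + c ^ 2 + g' u ^ 2) ≠ 0 := by positivity
      field_simp [hk0.ne']
      linear_combination hode u hu
    rw [h3] at h2
    have h4 : HasDerivAt (fun u : ℝ => u / k) (1 / k) u := by
      simpa using (hasDerivAt_id u).div_const k
    have h5 := h2.sub h4
    rw [sub_self] at h5
    exact h5
  have hconst := const_of_deriv_zero_Ioo hφ
  set C := Real.arctan (g' u₀ / k) - u₀ / k with hC
  have harc : ∀ u ∈ Set.Ioo a b, Real.arctan (g' u / k) = (u + C * k) / k := by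
    intro u hu
    have h := hconst u hu u₀ hu₀
    have : (u + C * k) / k = u / k + C := by rw [add_div, mul_div_cancel_right₀ _ hk0.ne']
    rw [this]
    linarith [h]
  refine ⟨C * k, g u₀ + (1 + c ^ 2) * Real.log (Real.cos ((u₀ + C * k) / k)), ?_⟩
  -- cos positivity on the interval
  have hcos : ∀ u ∈ Set.Ioo a b, 0 < Real.cos ((u + C * k) / k) := by
    intro u hu
    rw [← harc u hu]
    exact Real.cos_arctan_pos _
  -- g' u = k * tan ((u + C*k)/k)
  have htan : ∀ u ∈ Set.Ioo a b, g' u = k * Real.tan ((u + C * k) / k) := by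
    intro u hu
    have := congrArg Real.tan (harc u hu)
    rw [Real.tan_arctan] at this
    field_simp at this ⊢
    linarith [this]
  -- Step 2: g u + (1+c²) log (cos ((u+C*k)/k)) is constant.
  have hG : ∀ u ∈ Set.Ioo a b,
      HasDerivAt (fun u => g u + (1 + c ^ 2) * Real.log (Real.cos ((u + C * k) / k))) 0 u := by
    intro u hu
    have h1 : HasDerivAt (fun u : ℝ => (u + C * k) / k) (1 / k) u := by
      simpa using ((hasDerivAt_id u).add_const (C * k)).div_const k
    have h2 := h1.cos
    have h3 := h2.log (hcos u hu).ne'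
    have h4 := (h3.const_mul (1 + c ^ 2)).add (hg' u hu) -- wrong order; fix below
    have h5 := (hg' u hu).add (h3.const_mul (1 + c ^ 2))
    have h6 : g' u + (1 + c ^ 2) * (-Real.sin ((u + C * k) / k) * (1 / k) /
        Real.cos ((u + C * k) / k)) = 0 := by
      have ht := htan u hu
      rw [Real.tan_eq_sin_div_cos] at ht
      have hcp := (hcos u hu).ne'
      field_simp at ht ⊢
      rw [← hk2]
      rw [ht]
      ring
    rw [h6] at h5
    exact h5
  have hconst2 := const_of_deriv_zero_Ioo hG
  intro u hu
  have hcp := hcos u hu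
  refine ⟨by positivity, ?_⟩
  have := hconst2 u hu u₀ hu₀
  rw [abs_of_pos hcp]
  linarith [this]
end
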